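/- arXiv:2311.12248 — 9 statements merged into one kernel-verified Lean document; each statement's English description precedes it below -/
import Mathlib

section
/- Let p ≥ 1 and let f : X → [0,1] be a function on a finite set X with E[f] = α and ‖f − α‖_p ≥ ε·α (where ‖g‖_p = (E|g|^p)^{1/p}). Then either the fraction of x ∈ X with f(x) > α(1 + ε/4) is at least ε^p α^p / 4, or the fraction of x ∈ X with f(x) < α(1 − ε/4) is at least ε^p / 4. -/
open Finset

/-- If `f : X → [0,1]` has average `α` and `‖f − α‖_p ≥ ε·α`, then either
the fraction of points with `f(x) > α(1+ε/4)` is at least `ε^p α^p / 4`, or the fraction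
of points with `f(x) < α(1−ε/4)` is at least `ε^p / 4`. -/
theorem stmt_0 {X : Type*} [Fintype X] [Nonempty X]
    (f : X → ℝ) (hf : ∀ x, f x ∈ Set.Icc (0 : ℝ) 1)
    (α : ℝ) (hα : α = (∑ x, f x) / (Fintype.card X))
    (ε : ℝ) (hε : ε ∈ Set.Ioo (0 : ℝ) 1)
    (p : ℝ) (hp : 1 ≤ p)
    (hnorm : ((∑ x, |f x - α| ^ p) / (Fintype.card X)) ^ (1 / p) ≥ ε * α) :
    ((Finset.univ.filter fun x => f x > α * (1 + ε / 4)).card : ℝ) / (Fintype.card X)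
        ≥ ε ^ p * α ^ p / 4 ∨
    ((Finset.univ.filter fun x => f x < α * (1 - ε / 4)).card : ℝ) / (Fintype.card X)
        ≥ ε ^ p / 4 := by
  obtain ⟨hε0, hε1⟩ := hε
  have hp0 : (0:ℝ) < p := lt_of_lt_of_le one_pos hp
  have hnpos : (0:ℝ) < (Fintype.card X : ℝ) := by
    exact_mod_cast Fintype.card_pos
  set n : ℝ := (Fintype.card X : ℝ) with hn
  have hα0 : 0 ≤ α := by
    rw [hα]
    exact div_nonneg (Finset.sum_nonneg fun x _ => (hf x).1) hnpos.le
  have hα1 : α ≤ 1 := by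
    rw [hα, div_le_one hnpos]
    calc (∑ x, f x) ≤ ∑ x : X, (1:ℝ) := Finset.sum_le_sum fun x _ => (hf x).2
    _ = n := by simp [hn]
  rcases eq_or_lt_of_le hα0 with hz | hαpos
  · left
    have : ε ^ p * α ^ p / 4 = 0 := by
      rw [← hz, Real.zero_rpow (ne_of_gt hp0)]
      ring
    rw [this]
    positivity
  set S : ℝ := ∑ x, |f x - α| ^ p with hSdef
  have hS0 : 0 ≤ S := Finset.sum_nonneg fun x _ => Real.rpow_nonneg (abs_nonneg _) p
  have hS : (ε*α)^p ≤ S / n := by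
    have h1 : (ε*α)^p ≤ ((S/n)^(1/p))^p :=
      Real.rpow_le_rpow (by positivity) hnorm hp0.le
    rwa [← Real.rpow_mul (by positivity), one_div_mul_cancel (ne_of_gt hp0),
      Real.rpow_one] at h1
  by_contra hcon
  push_neg at hcon
  obtain ⟨hA, hB⟩ := hcon
  -- pointwise bound
  have hpt : ∀ x, |f x - α|^p ≤
      (if f x > α*(1+ε/4) then (1:ℝ) else 0) +
      (if f x < α*(1-ε/4) then α^p else 0) + (ε*α/4)^p := by
    intro x
    have h1 : 0 ≤ f x := (hf x).1
    have h2 : f x ≤ 1 := (hf x).2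
    have hεα4 : 0 ≤ (ε*α/4)^p := Real.rpow_nonneg (by positivity) p
    have hαp : 0 ≤ α^p := Real.rpow_nonneg hα0 p
    by_cases hx1 : f x > α*(1+ε/4)
    · have hle : |f x - α|^p ≤ 1 :=
        Real.rpow_le_one (abs_nonneg _) (by rw [abs_le]; constructor <;> linarith) hp0.le
      simp only [hx1, if_pos]
      split <;> linarith
    · by_cases hx2 : f x < α*(1-ε/4)
      · have hle : |f x - α|^p ≤ α^p := by
          apply Real.rpow_le_rpow (abs_nonneg _) _ hp0.le
          rw [abs_le]; constructor <;> nlinarith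
        simp only [hx1, if_neg, hx2, if_pos, not_false_iff]
        linarith
      · have hle : |f x - α|^p ≤ (ε*α/4)^p := by
          apply Real.rpow_le_rpow (abs_nonneg _) _ hp0.le
          push_neg at hx1 hx2
          rw [abs_le]; constructor <;> nlinarith
        simp only [hx1, hx2, if_neg, not_false_iff]
        linarith
  have hsum : S ≤ ((Finset.univ.filter fun x => f x > α * (1 + ε / 4)).card : ℝ)
      + ((Finset.univ.filter fun x => f x < α * (1 - ε / 4)).card : ℝ) * α^p
      + n * (ε*α/4)^p := by
    calc S ≤ ∑ x : X, ((if f x > α*(1+ε/4) then (1:ℝ) else 0) +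
        (if f x < α*(1-ε/4) then α^p else 0) + (ε*α/4)^p) :=
          Finset.sum_le_sum fun x _ => hpt x
    _ = (∑ x : X, (if f x > α*(1+ε/4) then (1:ℝ) else 0)) +
        (∑ x : X, (if f x < α*(1-ε/4) then α^p else 0)) + n * (ε*α/4)^p := by
          rw [Finset.sum_add_distrib, Finset.sum_add_distrib, Finset.sum_const]
          simp [hn, nsmul_eq_mul]
    _ = _ := by
          rw [← Finset.sum_filter, ← Finset.sum_filter, Finset.sum_const,
            Finset.sum_const, nsmul_eq_mul, nsmul_eq_mul, mul_one]
  -- arithmetic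
  have hεp : 0 < ε^p := Real.rpow_pos_of_pos hε0 p
  have hαp : 0 < α^p := Real.rpow_pos_of_pos hαpos p
  have hmul : (ε*α)^p = ε^p * α^p := Real.mul_rpow hε0.le hα0
  have h4p : (4:ℝ) ≤ (4:ℝ)^p := by
    nth_rewrite 1 [show (4:ℝ) = (4:ℝ)^(1:ℝ) by rw [Real.rpow_one]]
    exact (Real.rpow_le_rpow_left_iff (by norm_num : (1:ℝ) < 4)).mpr hp
  have hquarter : (ε*α/4)^p ≤ ε^p * α^p / 4 := by
    rw [Real.div_rpow (by positivity) (by norm_num), hmul]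
    apply div_le_div_of_nonneg_left (by positivity) (by norm_num) h4p
  have hAn : ((Finset.univ.filter fun x => f x > α * (1 + ε / 4)).card : ℝ)
      < n * (ε ^ p * α ^ p / 4) := by
    rw [div_lt_iff₀ hnpos] at hA
    linarith [hA]
  have hBn : ((Finset.univ.filter fun x => f x < α * (1 - ε / 4)).card : ℝ)
      < n * (ε ^ p / 4) := by
    rw [div_lt_iff₀ hnpos] at hB
    linarith [hB]
  have hSn : n * (ε^p * α^p) ≤ S := by
    rw [le_div_iff₀ hnpos, hmul] at hS
    linarith
  have hBcard : (0:ℝ) ≤ ((Finset.univ.filter fun x => f x < α * (1 - ε / 4)).card : ℝ) :=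
    Nat.cast_nonneg _
  nlinarith [mul_lt_mul_of_pos_right hBn hαp,
    mul_le_mul_of_nonneg_left hquarter hnpos.le,
    mul_pos hnpos (mul_pos hεp hαp)]
end

section
/- Gowers–Cauchy–Schwarz for grid norms: let k, p ∈ ℕ and for i ∈ [k], j ∈ [p] let f_{ij} : X_i × Y_j → ℝ_{≥0} be nonnegative functions on products of finite sets. Then E_{x_1∈X_1,...,x_k∈X_k} E_{y_1∈Y_1,...,y_p∈Y_p} [∏_{i=1}^k ∏_{j=1}^p f_{ij}(x_i, y_j)] ≤ ∏_{i=1}^k ∏_{j=1}^p ‖f_{ij}‖_{U(k,p)}, where ‖f‖_{U(k,p)} = (E_{x∈X^k, y∈Y^p} ∏_{i,j} f(x_i, y_j))^{1/(kp)}. -/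
set_option maxHeartbeats 800000
open Finset MeasureTheory
open scoped ENNReal

lemma ennreal_holder {α : Type*} [Fintype α] {ι : Type*} (s : Finset ι)
    (f : ι → α → ℝ≥0∞) {p : ι → ℝ} (hp : ∑ i ∈ s, p i = 1) (h2p : ∀ i ∈ s, 0 ≤ p i) :
    ∑ a : α, ∏ i ∈ s, f i a ^ p i ≤ ∏ i ∈ s, (∑ a : α, f i a) ^ p i := by
  letI : MeasurableSpace α := ⊤
  haveI : MeasurableSingletonClass α := ⟨fun _ => trivial⟩
  have hmeas : ∀ (g : α → ℝ≥0∞), AEMeasurable g (Measure.count) :=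
    fun g => Measurable.aemeasurable (fun _ _ => MeasurableSpace.measurableSet_top)
  have h := ENNReal.lintegral_prod_norm_pow_le (μ := Measure.count) s
    (fun i _ => hmeas (f i)) hp h2p
  rw [lintegral_count, tsum_fintype] at h
  refine h.trans (le_of_eq (Finset.prod_congr rfl fun i _ => ?_))
  rw [lintegral_count, tsum_fintype]

lemma real_holder {α : Type*} [Fintype α] {n : ℕ} (hn : 0 < n)
    (g : Fin n → α → ℝ) (hg : ∀ i a, 0 ≤ g i a) :
    ∑ a : α, ∏ i, g i a ≤ ∏ i, (∑ a : α, (g i a) ^ n) ^ ((n : ℝ)⁻¹) := by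
  have hn' : (n : ℝ) ≠ 0 := Nat.cast_ne_zero.2 hn.ne'
  have hsum : ∀ i, (0:ℝ) ≤ ∑ a : α, (g i a) ^ n :=
    fun i => Finset.sum_nonneg fun a _ => pow_nonneg (hg i a) n
  rw [← ENNReal.ofReal_le_ofReal_iff
    (Finset.prod_nonneg fun i _ => Real.rpow_nonneg (hsum i) _)]
  have key := ennreal_holder (α := α) (Finset.univ : Finset (Fin n))
    (f := fun i a => (ENNReal.ofReal (g i a)) ^ n) (p := fun _ => (n : ℝ)⁻¹)
    (by simp [hn']) (fun i _ => by positivity)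
  have lhs_eq : ENNReal.ofReal (∑ a : α, ∏ i, g i a)
      = ∑ a : α, ∏ i : Fin n, ((ENNReal.ofReal (g i a)) ^ n) ^ ((n : ℝ)⁻¹) := by
    rw [ENNReal.ofReal_sum_of_nonneg (fun a _ => Finset.prod_nonneg fun i _ => hg i a)]
    refine Finset.sum_congr rfl fun a _ => ?_
    rw [ENNReal.ofReal_prod_of_nonneg (fun i _ => hg i a)]
    refine Finset.prod_congr rfl fun i _ => ?_
    rw [← ENNReal.rpow_natCast, ← ENNReal.rpow_mul, mul_inv_cancel₀ hn', ENNReal.rpow_one]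
  have rhs_eq : ENNReal.ofReal (∏ i, (∑ a : α, (g i a) ^ n) ^ ((n : ℝ)⁻¹))
      = ∏ i : Fin n, (∑ a : α, (ENNReal.ofReal (g i a)) ^ n) ^ ((n : ℝ)⁻¹) := by
    rw [ENNReal.ofReal_prod_of_nonneg (fun i _ => Real.rpow_nonneg (hsum i) _)]
    refine Finset.prod_congr rfl fun i _ => ?_
    rw [← ENNReal.ofReal_rpow_of_nonneg (hsum i) (by positivity : (0:ℝ) ≤ (n:ℝ)⁻¹),
      ENNReal.ofReal_sum_of_nonneg (fun a _ => pow_nonneg (hg i a) n)]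
    congr 1
    exact Finset.sum_congr rfl fun a _ => (ENNReal.ofReal_pow (hg i a) n)
  rw [lhs_eq, rhs_eq]
  exact key

/-- The grid norm `‖f‖_{U(k,p)}` of a function `f : X → Y → ℝ`. -/
noncomputable def gridNorm {X Y : Type*} [Fintype X] [Fintype Y]
    (k p : ℕ) (f : X → Y → ℝ) : ℝ :=
  |(∑ x : Fin k → X, ∑ y : Fin p → Y, ∏ i, ∏ j, f (x i) (y j)) /
      ((Fintype.card X : ℝ) ^ k * (Fintype.card Y : ℝ) ^ p)| ^ (1 / (k * p : ℝ))

/-- Gowers–Cauchy–Schwarz inequality for grid norms of nonnegative functions. -/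
theorem stmt_1 {k p : ℕ} (hk : 0 < k) (hp : 0 < p)
    (X : Fin k → Type*) (Y : Fin p → Type*)
    [∀ i, Fintype (X i)] [∀ i, Nonempty (X i)]
    [∀ j, Fintype (Y j)] [∀ j, Nonempty (Y j)]
    (f : ∀ i j, X i → Y j → ℝ) (hf : ∀ i j x y, 0 ≤ f i j x y) :
    (∑ x : ∀ i, X i, ∑ y : ∀ j, Y j, ∏ i, ∏ j, f i j (x i) (y j)) /
        ((∏ i, (Fintype.card (X i) : ℝ)) * ∏ j, (Fintype.card (Y j) : ℝ))
      ≤ ∏ i, ∏ j, gridNorm k p (f i j) := by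
  classical
  have hk' : (k : ℝ) ≠ 0 := Nat.cast_ne_zero.2 hk.ne'
  have hp' : (p : ℝ) ≠ 0 := Nat.cast_ne_zero.2 hp.ne'
  set e : ℝ := (p : ℝ)⁻¹ * (k : ℝ)⁻¹ with he_def
  have he0 : (0:ℝ) ≤ e := by positivity
  set cX : Fin k → ℝ := fun i => (Fintype.card (X i) : ℝ) with hcX_def
  set cY : Fin p → ℝ := fun j => (Fintype.card (Y j) : ℝ) with hcY_def
  have hcX : ∀ i, 0 < cX i := fun i => by
    simpa [hcX_def] using (Nat.cast_pos (α := ℝ)).2 (Fintype.card_pos (α := X i))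
  have hcY : ∀ j, 0 < cY j := fun j => by
    simpa [hcY_def] using (Nat.cast_pos (α := ℝ)).2 (Fintype.card_pos (α := Y j))
  set g : (i : Fin k) → (∀ j, Y j) → ℝ := fun i y => ∑ x : X i, ∏ j, f i j x (y j)
    with hg_def
  have hg0 : ∀ i y, 0 ≤ g i y := fun i y =>
    Finset.sum_nonneg fun x _ => Finset.prod_nonneg fun j _ => hf i j x (y j)
  have h0 : ∀ i j (x : Fin k → X i), 0 ≤ ∑ y : Y j, ∏ a, f i j (x a) y := fun i j x =>
    Finset.sum_nonneg fun y _ => Finset.prod_nonneg fun a _ => hf i j (x a) y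
  set T : Fin k → Fin p → ℝ := fun i j =>
    ∑ x : Fin k → X i, ∑ y : Fin p → Y j, ∏ a, ∏ b, f i j (x a) (y b) with hT_def
  have hT0 : ∀ i j, 0 ≤ T i j := fun i j =>
    Finset.sum_nonneg fun x _ => Finset.sum_nonneg fun y _ =>
      Finset.prod_nonneg fun a _ => Finset.prod_nonneg fun b _ => hf i j (x a) (y b)
  -- Step A
  have stepA : (∑ x : ∀ i, X i, ∑ y : ∀ j, Y j, ∏ i, ∏ j, f i j (x i) (y j))
      = ∑ y : ∀ j, Y j, ∏ i, g i y := by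
    rw [Finset.sum_comm]
    refine Finset.sum_congr rfl fun y _ => ?_
    simp only [hg_def]
    rw [Finset.prod_univ_sum, Fintype.piFinset_univ]
  -- Step B
  have stepB : ∀ i, ∑ y : ∀ j, Y j, (g i y) ^ k
      = ∑ x : Fin k → X i, ∏ j, ∑ yj : Y j, ∏ a, f i j (x a) yj := by
    intro i
    have e1 : ∀ y : ∀ j, Y j, (g i y) ^ k
        = ∑ x : Fin k → X i, ∏ a, ∏ j, f i j (x a) (y j) := by
      intro y
      calc (g i y) ^ k = ∏ _a : Fin k, g i y := by
            rw [Finset.prod_const, Finset.card_univ, Fintype.card_fin]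
        _ = ∑ x : Fin k → X i, ∏ a, ∏ j, f i j (x a) (y j) := by
            simp only [hg_def]
            rw [Finset.prod_univ_sum, Fintype.piFinset_univ]
    simp only [e1]
    rw [Finset.sum_comm]
    refine Finset.sum_congr rfl fun x _ => ?_
    calc ∑ y : ∀ j, Y j, ∏ a, ∏ j, f i j (x a) (y j)
        = ∑ y : ∀ j, Y j, ∏ j, ∏ a, f i j (x a) (y j) :=
          Finset.sum_congr rfl fun y _ => Finset.prod_comm
      _ = ∏ j, ∑ yj : Y j, ∏ a, f i j (x a) yj := by
          rw [Finset.prod_univ_sum, Fintype.piFinset_univ]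
  -- Step C
  have stepC : ∀ i j, ∑ x : Fin k → X i, (∑ yj : Y j, ∏ a, f i j (x a) yj) ^ p = T i j := by
    intro i j
    refine Finset.sum_congr rfl fun x _ => ?_
    calc (∑ yj : Y j, ∏ a, f i j (x a) yj) ^ p
        = ∏ _b : Fin p, ∑ yj : Y j, ∏ a, f i j (x a) yj := by
          rw [Finset.prod_const, Finset.card_univ, Fintype.card_fin]
      _ = ∑ y : Fin p → Y j, ∏ b, ∏ a, f i j (x a) (y b) := by
          rw [Finset.prod_univ_sum, Fintype.piFinset_univ]
      _ = ∑ y : Fin p → Y j, ∏ a, ∏ b, f i j (x a) (y b) :=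
          Finset.sum_congr rfl fun y _ => Finset.prod_comm
  -- main inequality chain
  -- main inequality chain
  have hsx : ∀ i, (0:ℝ) ≤ ∑ x : Fin k → X i, ∏ j, ∑ yj : Y j, ∏ a, f i j (x a) yj :=
    fun i => Finset.sum_nonneg fun x _ => Finset.prod_nonneg fun j _ => h0 i j x
  have inner : ∀ i, (∑ x : Fin k → X i, ∏ j, ∑ yj : Y j, ∏ a, f i j (x a) yj)
      ≤ ∏ j, (T i j) ^ ((p:ℝ)⁻¹) := by
    intro i
    have h1 := real_holder (α := Fin k → X i) hp
      (fun j x => ∑ yj : Y j, ∏ a, f i j (x a) yj) (fun j x => h0 i j x)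
    refine h1.trans (le_of_eq ?_)
    exact Finset.prod_congr rfl fun j _ => by rw [stepC i j]
  have outer : ∀ i, (∑ y : ∀ j, Y j, (g i y) ^ k) ^ ((k:ℝ)⁻¹) ≤ ∏ j, (T i j) ^ e := by
    intro i
    rw [stepB i]
    refine (Real.rpow_le_rpow (hsx i) (inner i) (by positivity)).trans (le_of_eq ?_)
    have hTe : ∀ j : Fin p, T i j ^ e = (T i j ^ ((p:ℝ)⁻¹)) ^ ((k:ℝ)⁻¹) := fun j => by
      rw [he_def, Real.rpow_mul (hT0 i j)]
    rw [Finset.prod_congr rfl fun j (_ : j ∈ univ) => hTe j,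
      Real.finset_prod_rpow _ _ (fun j _ => Real.rpow_nonneg (hT0 i j) _) _]
  have key : (∑ x : ∀ i, X i, ∑ y : ∀ j, Y j, ∏ i, ∏ j, f i j (x i) (y j))
      ≤ ∏ i, ∏ j, (T i j) ^ e := by
    rw [stepA]
    have h1 := real_holder (α := ∀ j, Y j) hk g hg0
    refine h1.trans (Finset.prod_le_prod (fun i _ => ?_) fun i _ => outer i)
    exact Real.rpow_nonneg (Finset.sum_nonneg fun y _ => pow_nonneg (hg0 i y) k) _
  -- rewrite gridNorm
  have hgrid : ∀ i j, gridNorm k p (f i j)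
      = (T i j) ^ e / ((cX i) ^ ((p:ℝ)⁻¹) * (cY j) ^ ((k:ℝ)⁻¹)) := by
    intro i j
    have he' : 1 / ((k : ℝ) * (p : ℝ)) = e := by
      rw [he_def, one_div, mul_inv]; exact mul_comm _ _
    have hek : (k : ℝ) * e = (p : ℝ)⁻¹ := by
      rw [he_def, mul_comm ((p:ℝ)⁻¹) ((k:ℝ)⁻¹), ← mul_assoc, mul_inv_cancel₀ hk', one_mul]
    have hep : (p : ℝ) * e = (k : ℝ)⁻¹ := by
      rw [he_def, ← mul_assoc, mul_inv_cancel₀ hp', one_mul]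
    have hT0' := hT0 i j
    simp only [hT_def] at hT0'
    unfold gridNorm
    simp only [hT_def, hcX_def, hcY_def]
    rw [abs_of_nonneg (div_nonneg hT0' (by positivity)), he',
      Real.div_rpow hT0' (by positivity),
      Real.mul_rpow (by positivity) (by positivity),
      ← Real.rpow_natCast ((Fintype.card (X i) : ℝ)) k,
      ← Real.rpow_natCast ((Fintype.card (Y j) : ℝ)) p,
      ← Real.rpow_mul (by positivity), ← Real.rpow_mul (by positivity), hek, hep]
  -- final arithmetic
  have hPX : ∀ i : Fin k, ∏ _j : Fin p, (cX i) ^ ((p:ℝ)⁻¹) = cX i := by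
    intro i
    rw [Finset.prod_const, Finset.card_univ, Fintype.card_fin,
      ← Real.rpow_natCast ((cX i) ^ ((p:ℝ)⁻¹)) p, ← Real.rpow_mul (hcX i).le,
      inv_mul_cancel₀ hp', Real.rpow_one]
  have hPY : ∏ _i : Fin k, ∏ j, (cY j) ^ ((k:ℝ)⁻¹) = ∏ j, cY j := by
    rw [Finset.prod_const, Finset.card_univ, Fintype.card_fin, ← Finset.prod_pow]
    refine Finset.prod_congr rfl fun j _ => ?_
    rw [← Real.rpow_natCast ((cY j) ^ ((k:ℝ)⁻¹)) k, ← Real.rpow_mul (hcY j).le,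
      inv_mul_cancel₀ hk', Real.rpow_one]
  have hsplit : (∏ i, ∏ j, gridNorm k p (f i j))
      = (∏ i, ∏ j, (T i j) ^ e) / ((∏ i, cX i) * ∏ j, cY j) := by
    rw [Finset.prod_congr rfl fun i (_ : i ∈ univ) =>
      Finset.prod_congr rfl fun j (_ : j ∈ univ) => hgrid i j]
    simp only [Finset.prod_div_distrib, Finset.prod_mul_distrib]
    rw [Finset.prod_congr rfl fun i (_ : i ∈ univ) => hPX i, hPY]
  rw [hsplit]
  have hden : (0:ℝ) < (∏ i, cX i) * ∏ j, cY j :=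
    mul_pos (Finset.prod_pos fun i _ => hcX i) (Finset.prod_pos fun j _ => hcY j)
  exact (div_le_div_iff_of_pos_right hden).mpr key
end

section
/- Monotonicity of grid norms: if f : X × Y → ℝ_{≥0} is a nonnegative function on a product of nonempty finite sets, then for all natural numbers k ≤ k' and p, one has ‖f‖_{U(k,p)} ≤ ‖f‖_{U(k',p)}, and similarly the grid norm is monotone in the second parameter p. -/
open Finset

private lemma mean_pow_mono {ι : Type*} [Fintype ι] [Nonempty ι] (g : ι → ℝ)
    (hg : ∀ i, 0 ≤ g i) {k k' : ℕ} (hk : 0 < k) (hkk' : k ≤ k') :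
    ((∑ i, g i ^ k) / (Fintype.card ι : ℝ)) ^ (1/(k:ℝ)) ≤
      ((∑ i, g i ^ k') / (Fintype.card ι : ℝ)) ^ (1/(k':ℝ)) := by
  have hk' : 0 < k' := hk.trans_le hkk'
  have hn : (0:ℝ) < (Fintype.card ι : ℝ) := by
    exact_mod_cast Fintype.card_pos
  set A := (∑ i, g i ^ k) / (Fintype.card ι : ℝ) with hA
  set B := (∑ i, g i ^ k') / (Fintype.card ι : ℝ) with hB
  have hA0 : 0 ≤ A :=
    div_nonneg (Finset.sum_nonneg fun i _ => pow_nonneg (hg i) k) hn.le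
  have hB0 : 0 ≤ B :=
    div_nonneg (Finset.sum_nonneg fun i _ => pow_nonneg (hg i) k') hn.le
  have key : A ^ ((k':ℝ)/(k:ℝ)) ≤ B := by
    have hw : ∀ i : ι, i ∈ Finset.univ → 0 ≤ 1 / (Fintype.card ι : ℝ) :=
      fun i _ => by positivity
    have hw' : ∑ _i : ι, 1 / (Fintype.card ι : ℝ) = 1 := by
      rw [Finset.sum_const, Finset.card_univ, nsmul_eq_mul]
      field_simp
    have hz : ∀ i : ι, i ∈ Finset.univ → 0 ≤ g i ^ k := fun i _ => pow_nonneg (hg i) k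
    have hpp : (1:ℝ) ≤ (k':ℝ)/(k:ℝ) := by
      rw [le_div_iff₀ (by exact_mod_cast hk), one_mul]
      exact_mod_cast hkk'
    have := Real.rpow_arith_mean_le_arith_mean_rpow Finset.univ
      (fun _ : ι => 1 / (Fintype.card ι : ℝ)) (fun i => g i ^ k) hw hw' hz hpp
    have e1 : ∑ i : ι, 1 / (Fintype.card ι : ℝ) * g i ^ k = A := by
      simp_rw [one_div_mul_eq_div]
      rw [← Finset.sum_div]
    have e2 : ∑ i : ι, 1 / (Fintype.card ι : ℝ) * (g i ^ k) ^ ((k':ℝ)/(k:ℝ)) = B := by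
      have he : ∀ i : ι, (g i ^ k) ^ ((k':ℝ)/(k:ℝ)) = g i ^ k' := by
        intro i
        rw [← Real.rpow_natCast (g i) k, ← Real.rpow_mul (hg i),
          ← Real.rpow_natCast (g i) k']
        congr 1
        field_simp
      simp_rw [he]
      simp_rw [one_div_mul_eq_div]
      rw [← Finset.sum_div]
    rwa [e1, e2] at this
  calc A ^ (1/(k:ℝ)) = (A ^ ((k':ℝ)/(k:ℝ))) ^ (1/(k':ℝ)) := by
        rw [← Real.rpow_mul hA0]
        congr 1
        field_simp
    _ ≤ B ^ (1/(k':ℝ)) := Real.rpow_le_rpow (Real.rpow_nonneg hA0 _) key (by positivity)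

private lemma gridNorm_eq {X Y : Type*} [Fintype X] [Fintype Y] [Nonempty X] [Nonempty Y]
    (f : X → Y → ℝ) (hf : ∀ x y, 0 ≤ f x y) (k p : ℕ) :
    gridNorm k p f = ((∑ y : Fin p → Y,
        ((∑ x : X, ∏ j, f x (y j)) / (Fintype.card X : ℝ)) ^ k) /
        (Fintype.card (Fin p → Y) : ℝ)) ^ ((1/(k:ℝ)) * (1/(p:ℝ))) := by
  have hX : (0:ℝ) < (Fintype.card X : ℝ) := by exact_mod_cast Fintype.card_pos
  have hY : (0:ℝ) < (Fintype.card Y : ℝ) := by exact_mod_cast Fintype.card_pos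
  have e : (∑ x : Fin k → X, ∑ y : Fin p → Y, ∏ i, ∏ j, f (x i) (y j)) =
      ∑ y : Fin p → Y, (∑ x : X, ∏ j, f x (y j)) ^ k := by
    rw [Finset.sum_comm]
    refine Finset.sum_congr rfl fun y _ => ?_
    rw [Finset.sum_pow', Fintype.piFinset_univ]
  have hTnn : ∀ y : Fin p → Y, (0:ℝ) ≤ ∑ x : X, ∏ j, f x (y j) :=
    fun y => Finset.sum_nonneg fun x _ =>
      Finset.prod_nonneg fun j _ => hf x (y j)
  have hnum : (0:ℝ) ≤ ∑ y : Fin p → Y, (∑ x : X, ∏ j, f x (y j)) ^ k :=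
    Finset.sum_nonneg fun y _ => pow_nonneg (hTnn y) k
  unfold gridNorm
  rw [e, Fintype.card_fun, Fintype.card_fin, Nat.cast_pow]
  rw [abs_of_nonneg (div_nonneg hnum (by positivity))]
  have e2 : ∑ y : Fin p → Y, ((∑ x : X, ∏ j, f x (y j)) / (Fintype.card X : ℝ)) ^ k =
      (∑ y : Fin p → Y, (∑ x : X, ∏ j, f x (y j)) ^ k) / (Fintype.card X : ℝ) ^ k := by
    simp_rw [div_pow]
    rw [Finset.sum_div]
  rw [e2, div_div]
  congr 1
  rw [one_div_mul_one_div, ← Nat.cast_mul]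

private lemma gridNorm_mono_left {X Y : Type*} [Fintype X] [Fintype Y] [Nonempty X] [Nonempty Y]
    (f : X → Y → ℝ) (hf : ∀ x y, 0 ≤ f x y)
    (k k' p : ℕ) (hk : 0 < k) (hp : 0 < p) (hkk' : k ≤ k') :
    gridNorm k p f ≤ gridNorm k' p f := by
  have hTnn : ∀ y : Fin p → Y, (0:ℝ) ≤ (∑ x : X, ∏ j, f x (y j)) / (Fintype.card X : ℝ) :=
    fun y => div_nonneg (Finset.sum_nonneg fun x _ =>
      Finset.prod_nonneg fun j _ => hf x (y j)) (by positivity)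
  rw [gridNorm_eq f hf k p, gridNorm_eq f hf k' p]
  have hc : (0:ℝ) < (Fintype.card (Fin p → Y) : ℝ) := by exact_mod_cast Fintype.card_pos
  have h1 : (0:ℝ) ≤ (∑ y : Fin p → Y,
      ((∑ x : X, ∏ j, f x (y j)) / (Fintype.card X : ℝ)) ^ k) /
      (Fintype.card (Fin p → Y) : ℝ) :=
    div_nonneg (Finset.sum_nonneg fun y _ => pow_nonneg (hTnn y) k) hc.le
  rw [Real.rpow_mul h1]
  have h2 : (0:ℝ) ≤ (∑ y : Fin p → Y,
      ((∑ x : X, ∏ j, f x (y j)) / (Fintype.card X : ℝ)) ^ k') /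
      (Fintype.card (Fin p → Y) : ℝ) :=
    div_nonneg (Finset.sum_nonneg fun y _ => pow_nonneg (hTnn y) k') hc.le
  rw [Real.rpow_mul h2]
  refine Real.rpow_le_rpow (Real.rpow_nonneg h1 _) ?_ (by positivity)
  exact mean_pow_mono _ hTnn hk hkk'

private lemma gridNorm_swap {X Y : Type*} [Fintype X] [Fintype Y]
    (f : X → Y → ℝ) (k p : ℕ) :
    gridNorm k p f = gridNorm p k (fun y x => f x y) := by
  unfold gridNorm
  rw [Finset.sum_comm]
  have e : (∑ y : Fin p → Y, ∑ x : Fin k → X, ∏ i : Fin k, ∏ j : Fin p, f (x i) (y j)) =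
      ∑ y : Fin p → Y, ∑ x : Fin k → X, ∏ j : Fin p, ∏ i : Fin k, f (x i) (y j) :=
    Finset.sum_congr rfl fun y _ => Finset.sum_congr rfl fun x _ => Finset.prod_comm
  rw [e, mul_comm ((Fintype.card X : ℝ) ^ k), mul_comm (k:ℝ) (p:ℝ)]

/-- Monotonicity of grid norms of nonnegative functions in both parameters. -/
theorem stmt_2 {X Y : Type*} [Fintype X] [Fintype Y] [Nonempty X] [Nonempty Y]
    (f : X → Y → ℝ) (hf : ∀ x y, 0 ≤ f x y)
    (k k' p p' : ℕ) (hk : 0 < k) (hp : 0 < p) (hkk' : k ≤ k') (hpp' : p ≤ p') :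
    gridNorm k p f ≤ gridNorm k' p f ∧ gridNorm k p f ≤ gridNorm k p' f := by
  constructor
  · exact gridNorm_mono_left f hf k k' p hk hp hkk'
  · rw [gridNorm_swap f k p, gridNorm_swap f k p']
    exact gridNorm_mono_left (fun y x => f x y) (fun y x => hf x y) p p' k hp hk hpp'
end

section
/- Rounding a convex combination of rectangles (part i): let Δ ≥ 1, γ, ε ∈ (0,1], let D : X × Y → ℝ_{≥0} with ‖D‖_∞ ≤ Δ, and let F be a convex combination of indicator functions of combinatorial rectangles S × T (S ⊆ X, T ⊆ Y) with ‖F‖_1 ≥ γ. If ⟨F/‖F‖_1, D⟩ ≥ 1 + ε, then there exists a rectangle S × T with (|S||T|)/(|X||Y|) ≥ εγ/(4Δ) such that E_{(x,y) ∈ S×T} D(x,y) ≥ 1 + ε/2. -/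
open Finset
open scoped Classical

/-- rounding a convex combination of combinatorial rectangles, upper case.
`F` is a convex combination of indicators of rectangles, `D` is nonnegative and bounded
by `Δ`, and if `⟨F/‖F‖₁, D⟩ ≥ 1 + ε` then some rectangle of density at least `εγ/(4Δ)`
has average of `D` at least `1 + ε/2`. -/
theorem stmt_3 {X Y : Type*} [Fintype X] [Fintype Y] [Nonempty X] [Nonempty Y]
    (Δ γ ε : ℝ) (hΔ : 1 ≤ Δ) (hγ : γ ∈ Set.Ioc (0 : ℝ) 1) (hε : ε ∈ Set.Ioc (0 : ℝ) 1)
    (D : X → Y → ℝ) (hD0 : ∀ x y, 0 ≤ D x y) (hDΔ : ∀ x y, D x y ≤ Δ)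
    (F : X → Y → ℝ)
    (hF : ∃ (n : ℕ) (c : Fin n → ℝ) (S : Fin n → Finset X) (T : Fin n → Finset Y),
        (∀ i, 0 ≤ c i) ∧ (∑ i, c i = 1) ∧
        ∀ x y, F x y = ∑ i, c i * (if x ∈ S i ∧ y ∈ T i then 1 else 0))
    (hF1 : γ ≤ (∑ x, ∑ y, |F x y|) / ((Fintype.card X : ℝ) * Fintype.card Y))
    (hFD : ((∑ x, ∑ y, F x y * D x y) / ((Fintype.card X : ℝ) * Fintype.card Y)) /
            ((∑ x, ∑ y, |F x y|) / ((Fintype.card X : ℝ) * Fintype.card Y))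
          ≥ 1 + ε) :
    ∃ (S : Finset X) (T : Finset Y),
      ((S.card : ℝ) * T.card) / ((Fintype.card X : ℝ) * Fintype.card Y) ≥ ε * γ / (4 * Δ) ∧
      (∑ x ∈ S, ∑ y ∈ T, D x y) / ((S.card : ℝ) * T.card) ≥ 1 + ε / 2 := by
  classical
  obtain ⟨hγ0, hγ1⟩ := hγ
  obtain ⟨hε0, hε1⟩ := hε
  obtain ⟨n, c, S, T, hc0, hc1, hFdef⟩ := hF
  set N : ℝ := (Fintype.card X : ℝ) * Fintype.card Y with hN
  have hNpos : 0 < N := by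
    have hx : 0 < (Fintype.card X : ℝ) := by exact_mod_cast Fintype.card_pos
    have hy : 0 < (Fintype.card Y : ℝ) := by exact_mod_cast Fintype.card_pos
    exact mul_pos hx hy
  set s : Fin n → ℝ := fun i => ((S i).card : ℝ) * (T i).card with hs
  set d : Fin n → ℝ := fun i => ∑ x ∈ S i, ∑ y ∈ T i, D x y with hd
  have hΔ0 : (0:ℝ) < Δ := lt_of_lt_of_le one_pos hΔ
  have hFnn : ∀ x y, 0 ≤ F x y := fun x y => by
    rw [hFdef]
    exact Finset.sum_nonneg fun i _ => mul_nonneg (hc0 i) (by positivity)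
  -- ℓ₁ norm identity
  have hA : (∑ x, ∑ y, |F x y|) = ∑ i, c i * s i := by
    have h1 : ∀ x y, |F x y| = F x y := fun x y => abs_of_nonneg (hFnn x y)
    simp_rw [h1, hFdef]
    conv_lhs => enter [2, x]; rw [Finset.sum_comm]
    rw [Finset.sum_comm]
    refine Finset.sum_congr rfl fun i _ => ?_
    simp_rw [← Finset.mul_sum]
    congr 1
    simp [ite_and, Finset.sum_ite_mem]
    rfl
  -- inner product identity
  have hB : (∑ x, ∑ y, F x y * D x y) = ∑ i, c i * d i := by
    simp_rw [hFdef, Finset.sum_mul]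
    conv_lhs => enter [2, x]; rw [Finset.sum_comm]
    rw [Finset.sum_comm]
    refine Finset.sum_congr rfl fun i _ => ?_
    simp_rw [mul_assoc, ← Finset.mul_sum]
    congr 1
    simp_rw [ite_mul, one_mul, zero_mul, ite_and]
    simp [Finset.sum_ite_mem]
    rfl
  set A : ℝ := ∑ i, c i * s i with hAdef
  set B : ℝ := ∑ i, c i * d i with hBdef
  rw [hA] at hF1 hFD
  rw [hB] at hFD
  have hAN : γ * N ≤ A := (le_div_iff₀ hNpos).mp hF1
  have hApos : 0 < A := lt_of_lt_of_le (by positivity) hAN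
  have hBA : 1 + ε ≤ B / A := by
    have heq : B / N / (A / N) = B / A := by
      field_simp
    rwa [heq] at hFD
  have hBge : (1 + ε) * A ≤ B := (le_div_iff₀ hApos).mp hBA
  have hsnn : ∀ i, 0 ≤ s i := fun i => by simp only [hs]; positivity
  by_contra hcon
  push_neg at hcon
  -- pointwise bound on each term
  have key : ∀ i, c i * d i ≤ c i * ((1 + ε / 2) * s i) + c i * (N * (ε * γ) / 4) := by
    intro i
    have hsnn' : 0 ≤ s i := hsnn i
    have hdΔ : d i ≤ Δ * s i := by
      calc d i ≤ ∑ x ∈ S i, ∑ y ∈ T i, Δ :=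
            Finset.sum_le_sum fun x _ => Finset.sum_le_sum fun y _ => hDΔ x y
        _ = Δ * s i := by simp [hs, mul_comm]; ring
    by_cases hbig : s i / N ≥ ε * γ / (4 * Δ)
    · have hspos : 0 < s i := by
        have h0 : (0:ℝ) < ε * γ / (4 * Δ) := by positivity
        rcases div_pos_iff.mp (lt_of_lt_of_le h0 hbig) with ⟨h, _⟩ | ⟨_, h⟩
        · exact h
        · linarith
      have havg := hcon (S i) (T i) hbig
      have hdle : d i ≤ (1 + ε / 2) * s i := by
        have := (div_lt_iff₀ hspos).mp havg
        linarith
      have h1 : 0 ≤ c i * (N * (ε * γ) / 4) :=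
        mul_nonneg (hc0 i) (by positivity)
      have h2 := mul_le_mul_of_nonneg_left hdle (hc0 i)
      linarith
    · push_neg at hbig
      have hslt : s i < N * (ε * γ) / (4 * Δ) := by
        have := (div_lt_iff₀ hNpos).mp hbig
        calc s i < ε * γ / (4 * Δ) * N := this
          _ = N * (ε * γ) / (4 * Δ) := by ring
      have hdle : d i ≤ N * (ε * γ) / 4 := by
        calc d i ≤ Δ * s i := hdΔ
          _ ≤ Δ * (N * (ε * γ) / (4 * Δ)) := by nlinarith
          _ = N * (ε * γ) / 4 := by field_simp
      have h1 : 0 ≤ c i * ((1 + ε / 2) * s i) :=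
        mul_nonneg (hc0 i) (mul_nonneg (by linarith) (hsnn i))
      have h2 := mul_le_mul_of_nonneg_left hdle (hc0 i)
      linarith
  have hBsum : B ≤ (1 + ε / 2) * A + N * (ε * γ) / 4 := by
    calc B ≤ ∑ i, (c i * ((1 + ε / 2) * s i) + c i * (N * (ε * γ) / 4)) :=
          Finset.sum_le_sum fun i _ => key i
      _ = (1 + ε / 2) * A + (∑ i, c i) * (N * (ε * γ) / 4) := by
          rw [Finset.sum_add_distrib, ← Finset.sum_mul, hAdef, Finset.mul_sum]
          congr 1
          exact Finset.sum_congr rfl fun i _ => by ring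
      _ = (1 + ε / 2) * A + N * (ε * γ) / 4 := by rw [hc1, one_mul]
  -- N * ε * γ / 4 ≤ ε * A / 4
  have hfinal : N * (ε * γ) / 4 ≤ ε * A / 4 := by
    have := mul_le_mul_of_nonneg_left hAN (le_of_lt hε0)
    nlinarith
  have hεA : 0 < ε * A := mul_pos hε0 hApos
  nlinarith
end

section
/- Rounding a convex combination of rectangles (part ii): let Δ ≥ 1, γ, ε ∈ (0,1], let D : X × Y → ℝ_{≥0} with ‖D‖_∞ ≤ Δ, and let F be a convex combination of indicator functions of combinatorial rectangles with ‖F‖_1 ≥ γ. If ⟨F/‖F‖_1, D⟩ ≤ 1 − ε, then there exists a rectangle S × T with (|S||T|)/(|X||Y|) ≥ εγ/(4Δ) such that E_{(x,y) ∈ S×T} D(x,y) ≤ 1 − ε/2. -/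
open Finset
open scoped Classical

/-- rounding a convex combination of combinatorial rectangles, lower case.
`F` is a convex combination of indicators of rectangles, `D` is nonnegative and bounded
by `Δ`, and if `⟨F/‖F‖₁, D⟩ ≤ 1 − ε` then some rectangle of density at least `εγ/(4Δ)`
has average of `D` at most `1 − ε/2`. -/
theorem stmt_4 {X Y : Type*} [Fintype X] [Fintype Y] [Nonempty X] [Nonempty Y]
    (Δ γ ε : ℝ) (hΔ : 1 ≤ Δ) (hγ : γ ∈ Set.Ioc (0 : ℝ) 1) (hε : ε ∈ Set.Ioc (0 : ℝ) 1)
    (D : X → Y → ℝ) (hD0 : ∀ x y, 0 ≤ D x y) (hDΔ : ∀ x y, D x y ≤ Δ)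
    (F : X → Y → ℝ)
    (hF : ∃ (n : ℕ) (c : Fin n → ℝ) (S : Fin n → Finset X) (T : Fin n → Finset Y),
        (∀ i, 0 ≤ c i) ∧ (∑ i, c i = 1) ∧
        ∀ x y, F x y = ∑ i, c i * (if x ∈ S i ∧ y ∈ T i then 1 else 0))
    (hF1 : γ ≤ (∑ x, ∑ y, |F x y|) / ((Fintype.card X : ℝ) * Fintype.card Y))
    (hFD : ((∑ x, ∑ y, F x y * D x y) / ((Fintype.card X : ℝ) * Fintype.card Y)) /
            ((∑ x, ∑ y, |F x y|) / ((Fintype.card X : ℝ) * Fintype.card Y))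
          ≤ 1 - ε) :
    ∃ (S : Finset X) (T : Finset Y),
      ((S.card : ℝ) * T.card) / ((Fintype.card X : ℝ) * Fintype.card Y) ≥ ε * γ / (4 * Δ) ∧
      (∑ x ∈ S, ∑ y ∈ T, D x y) / ((S.card : ℝ) * T.card) ≤ 1 - ε / 2 := by
  classical
  obtain ⟨n, c, S, T, hc0, hc1, hFeq⟩ := hF
  set N : ℝ := (Fintype.card X : ℝ) * Fintype.card Y with hNdef
  have hNpos : 0 < N := by
    have hx : 0 < (Fintype.card X : ℝ) := by exact_mod_cast Fintype.card_pos
    have hy : 0 < (Fintype.card Y : ℝ) := by exact_mod_cast Fintype.card_pos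
    exact mul_pos hx hy
  -- rectangle sum lemma
  have hrect : ∀ (S' : Finset X) (T' : Finset Y) (g : X → Y → ℝ),
      (∑ x, ∑ y, (if x ∈ S' ∧ y ∈ T' then g x y else 0)) = ∑ x ∈ S', ∑ y ∈ T', g x y := by
    intro S' T' g
    have h1 : ∀ x, (∑ y, if x ∈ S' ∧ y ∈ T' then g x y else 0)
        = if x ∈ S' then ∑ y ∈ T', g x y else 0 := by
      intro x
      by_cases hx : x ∈ S'
      · simp only [hx, true_and, if_true]
        rw [Finset.sum_ite_mem, Finset.univ_inter]
      · simp [hx]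
    simp only [h1]
    rw [Finset.sum_ite_mem, Finset.univ_inter]
  have habs : ∀ x y, |F x y| = F x y := by
    intro x y
    rw [abs_of_nonneg]
    rw [hFeq]
    exact Finset.sum_nonneg fun i _ => mul_nonneg (hc0 i) (by positivity)
  -- swap sums helper
  have hswap : ∀ g : X → Y → Fin n → ℝ,
      (∑ x, ∑ y, ∑ i, g x y i) = ∑ i, ∑ x, ∑ y, g x y i := by
    intro g
    calc (∑ x, ∑ y, ∑ i, g x y i) = ∑ x, ∑ i, ∑ y, g x y i :=
          Finset.sum_congr rfl fun x _ => Finset.sum_comm ..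
      _ = ∑ i, ∑ x, ∑ y, g x y i := Finset.sum_comm ..
  set m : Fin n → ℝ := fun i => ((S i).card : ℝ) * ((T i).card : ℝ) with hmdef
  set P : Fin n → ℝ := fun i => ∑ x ∈ S i, ∑ y ∈ T i, D x y with hPdef
  have hsumF : (∑ x, ∑ y, F x y) = ∑ i, c i * m i := by
    simp only [hFeq]
    rw [hswap]
    refine Finset.sum_congr rfl fun i _ => ?_
    have hmul : (∑ x, ∑ y, c i * (if x ∈ S i ∧ y ∈ T i then (1:ℝ) else 0))
        = c i * ∑ x, ∑ y, (if x ∈ S i ∧ y ∈ T i then (1:ℝ) else 0) := by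
      rw [Finset.mul_sum]
      refine Finset.sum_congr rfl fun x _ => ?_
      rw [Finset.mul_sum]
    rw [hmul, hrect (S i) (T i) (fun _ _ => (1 : ℝ))]
    simp [hmdef]
  have hsumFD : (∑ x, ∑ y, F x y * D x y) = ∑ i, c i * P i := by
    have : ∀ x y, F x y * D x y = ∑ i, c i * (if x ∈ S i ∧ y ∈ T i then D x y else 0) := by
      intro x y
      rw [hFeq, Finset.sum_mul]
      refine Finset.sum_congr rfl fun i _ => ?_
      by_cases h : x ∈ S i ∧ y ∈ T i <;> simp [h, mul_assoc]
    simp only [this]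
    rw [hswap]
    refine Finset.sum_congr rfl fun i _ => ?_
    have hmul : (∑ x, ∑ y, c i * (if x ∈ S i ∧ y ∈ T i then D x y else 0))
        = c i * ∑ x, ∑ y, (if x ∈ S i ∧ y ∈ T i then D x y else 0) := by
      rw [Finset.mul_sum]
      refine Finset.sum_congr rfl fun x _ => ?_
      rw [Finset.mul_sum]
    rw [hmul, hrect (S i) (T i) D]
  set W : ℝ := ∑ i, c i * m i with hWdef
  have hFabs : (∑ x, ∑ y, |F x y|) = W := by
    rw [← hsumF]; exact Finset.sum_congr rfl fun x _ => Finset.sum_congr rfl fun y _ => habs x y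
  have hWγ : γ * N ≤ W := by
    have := hF1
    rw [hFabs] at this
    calc γ * N ≤ (W / N) * N := by
          exact mul_le_mul_of_nonneg_right this hNpos.le
      _ = W := by field_simp
  have hWpos : 0 < W := lt_of_lt_of_le (mul_pos hγ.1 hNpos) hWγ
  have hP : (∑ i, c i * P i) ≤ (1 - ε) * W := by
    rw [hFabs, hsumFD] at hFD
    have heq : ((∑ i, c i * P i) / N) / (W / N) = (∑ i, c i * P i) / W := by
      field_simp
    rw [heq, div_le_iff₀ hWpos] at hFD
    linarith [hFD]
  by_contra hcon
  push_neg at hcon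
  set t : ℝ := ε * γ / (4 * Δ) with htdef
  have hΔpos : (0:ℝ) < Δ := lt_of_lt_of_le one_pos hΔ
  have htpos : 0 < t := div_pos (mul_pos hε.1 hγ.1) (by linarith)
  have key : ∀ i, (1 - ε / 2) * (c i * m i) - c i * (t * N) ≤ c i * P i := by
    intro i
    have hm0 : 0 ≤ m i := by positivity
    have hP0 : 0 ≤ P i :=
      Finset.sum_nonneg fun x _ => Finset.sum_nonneg fun y _ => hD0 x y
    by_cases hbig : t ≤ m i / N
    · have hmN : t * N ≤ m i := (le_div_iff₀ hNpos).mp hbig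
      have hmpos : 0 < m i := lt_of_lt_of_le (by positivity) hmN
      have := hcon (S i) (T i)
      rw [ge_iff_le] at this
      have havg : 1 - ε / 2 < P i / m i := this hbig
      have : (1 - ε / 2) * m i < P i := (lt_div_iff₀ hmpos).mp havg
      nlinarith [hc0 i, mul_nonneg (hc0 i) (mul_pos htpos hNpos).le]
    · push_neg at hbig
      have hmN : m i < t * N := (div_lt_iff₀ hNpos).mp hbig
      nlinarith [hc0 i, hε.1, hε.2, mul_nonneg (hc0 i) hP0,
        mul_nonneg (hc0 i) hm0, mul_le_mul_of_nonneg_left hmN.le (hc0 i)]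
  have hsumkey : (1 - ε / 2) * W - t * N ≤ ∑ i, c i * P i := by
    calc (1 - ε / 2) * W - t * N
        = ∑ i, ((1 - ε / 2) * (c i * m i) - c i * (t * N)) := by
          rw [Finset.sum_sub_distrib, ← Finset.mul_sum, ← Finset.sum_mul, hc1, one_mul]
      _ ≤ ∑ i, c i * P i := Finset.sum_le_sum fun i _ => key i
  have hfinal : (ε / 2) * W ≤ t * N := by linarith
  have h1 : (ε / 2) * (γ * N) ≤ ε * γ / (4 * Δ) * N := by
    calc (ε / 2) * (γ * N) ≤ (ε / 2) * W :=
          mul_le_mul_of_nonneg_left hWγ (by linarith [hε.1])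
      _ ≤ t * N := hfinal
  have h2 : ε * γ / (4 * Δ) * N = ε * γ * N / (4 * Δ) := by ring
  have h3 : ε * γ * N / (4 * Δ) ≤ ε * γ * N / 4 :=
    div_le_div_of_nonneg_left (mul_pos (mul_pos hε.1 hγ.1) hNpos).le (by norm_num)
      (by linarith)
  linarith [h1, h2 ▸ h1, h3, mul_pos (mul_pos hε.1 hγ.1) hNpos]
end

section
/- If g : X × Y → ℝ satisfies ‖g‖_{U(2,p)}² ≥ ε for some even p ≥ 2 and some ε ∈ (0, 1/2], and E_{z∈Y} g(x, z) = 0 for every x ∈ X, then for every even p' ≥ 2p/ε one has ‖1 + g‖_{U(2,p')} ≥ 1 + ε/5. -/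
open Finset

lemma grid_inner {X Y : Type*} [Fintype X] [Fintype Y] (f : X → Y → ℝ) (q : ℕ) :
    ∑ x : Fin 2 → X, ∑ y : Fin q → Y, ∏ i, ∏ j, f (x i) (y j)
      = ∑ x : Fin 2 → X, (∑ z, f (x 0) z * f (x 1) z) ^ q := by
  classical
  refine Fintype.sum_congr _ _ fun x => ?_
  rw [Fintype.sum_pow]
  refine Fintype.sum_congr _ _ fun y => ?_
  rw [Finset.prod_comm]
  refine Fintype.prod_congr _ _ fun j => ?_
  rw [Fin.prod_univ_two]

lemma even_extract (f : ℕ → ℝ) (K : ℕ) :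
    ∑ s ∈ range (2*K+1), (if Even s then f s else 0) = ∑ j ∈ range (K+1), f (2*j) := by
  induction K with
  | zero => simp
  | succ K ih =>
      have h1 : 2*(K+1)+1 = (2*K+1)+1+1 := by ring
      rw [h1, sum_range_succ, sum_range_succ, ih, sum_range_succ]
      have h2 : ¬ Even (2*K+1) := by simp [parity_simps]
      have h3 : Even (2*K+1+1) := by simp [parity_simps]
      rw [if_neg h2, if_pos h3]
      have : 2*K+1+1 = 2*(K+1) := by ring
      rw [this, sum_range_succ, sum_range_succ]; ring

lemma even_sum_eq (ε : ℝ) (K : ℕ) :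
    ∑ j ∈ range (K+1), ((2*K).choose (2*j) : ℝ) * ε^(2*j)
      = ((1+ε)^(2*K) + (1-ε)^(2*K)) / 2 := by
  have hA : (1+ε)^(2*K) = ∑ s ∈ range (2*K+1), ε^s * ((2*K).choose s : ℝ) := by
    rw [add_comm, add_pow]; simp
  have hB : (1-ε)^(2*K) = ∑ s ∈ range (2*K+1), (-ε)^s * ((2*K).choose s : ℝ) := by
    rw [sub_eq_add_neg, add_comm, add_pow]; simp
  have key : ∑ s ∈ range (2*K+1), (if Even s then ((2*K).choose s : ℝ) * ε^s * 2 else 0)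
      = (1+ε)^(2*K) + (1-ε)^(2*K) := by
    rw [hA, hB, ← sum_add_distrib]
    refine sum_congr rfl fun s _ => ?_
    by_cases h : Even s
    · rw [if_pos h, h.neg_pow]; ring
    · rw [if_neg h, ((Nat.not_even_iff_odd.mp h)).neg_pow]; ring
  rw [even_extract (fun s => ((2*K).choose s : ℝ) * ε^s * 2) K] at key
  have : (∑ j ∈ range (K+1), ((2*K).choose (2*j) : ℝ) * ε^(2*j)) * 2
      = (1+ε)^(2*K) + (1-ε)^(2*K) := by
    rw [← key, sum_mul]
  linarith


lemma moments_ge (a : ℕ → ℝ) (h0 : a 0 = 1) (hnn : ∀ j, 0 ≤ a j)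
    (hlc : ∀ j, a (j+1)^2 ≤ a j * a (j+2)) (ε : ℝ) (hε : 0 ≤ ε)
    (j0 : ℕ) (hj0 : 1 ≤ j0) (hbase : ε ^ (2*j0) ≤ a j0) :
    ∀ j, j0 ≤ j → ε ^ (2*j) ≤ a j := by
  have step1 : ∀ j, a j ^ (j+1) ≤ a (j+1) ^ j := by
    intro j
    induction j with
    | zero => simp [h0]
    | succ j ih =>
        rcases eq_or_lt_of_le (hnn (j+1)) with h | h
        · have hz : a (j+1) ^ (j+1+1) = 0 := by rw [← h]; simp
          rw [hz]; exact pow_nonneg (hnn _) _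
        · have key : a (j+1) ^ (j+1+1) * a (j+1) ^ j ≤ a (j+2) ^ (j+1) * a (j+1) ^ j := by
            have h1 : (a (j+1) ^ 2) ^ (j+1) ≤ (a j * a (j+2)) ^ (j+1) :=
              pow_le_pow_left₀ (sq_nonneg _) (hlc j) _
            have h2 : a j ^ (j+1) * a (j+2) ^ (j+1) ≤ a (j+1) ^ j * a (j+2) ^ (j+1) :=
              mul_le_mul_of_nonneg_right ih (pow_nonneg (hnn _) _)
            calc a (j+1) ^ (j+1+1) * a (j+1) ^ j = (a (j+1) ^ 2) ^ (j+1) := by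
                  rw [← pow_mul, ← pow_add]; congr 1; ring
              _ ≤ (a j * a (j+2)) ^ (j+1) := h1
              _ = a j ^ (j+1) * a (j+2) ^ (j+1) := mul_pow _ _ _
              _ ≤ a (j+1) ^ j * a (j+2) ^ (j+1) := h2
              _ = a (j+2) ^ (j+1) * a (j+1) ^ j := by ring
          exact le_of_mul_le_mul_right key (pow_pos h _)
  have step2 : ∀ j, j0 ≤ j → a j0 ^ j ≤ a j ^ j0 := by
    intro j hj
    induction j, hj using Nat.le_induction with
    | base => rfl
    | succ j hj ih =>
        have hjpos : j ≠ 0 := by omega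
        have h1 : (a j0 ^ (j+1)) ^ j ≤ (a (j+1) ^ j0) ^ j := by
          calc (a j0 ^ (j+1)) ^ j = (a j0 ^ j) ^ (j+1) := by rw [← pow_mul, ← pow_mul]; ring_nf
            _ ≤ (a j ^ j0) ^ (j+1) := pow_le_pow_left₀ (pow_nonneg (hnn _) _) ih _
            _ = (a j ^ (j+1)) ^ j0 := by rw [← pow_mul, ← pow_mul]; ring_nf
            _ ≤ (a (j+1) ^ j) ^ j0 := pow_le_pow_left₀ (pow_nonneg (hnn _) _) (step1 j) _
            _ = (a (j+1) ^ j0) ^ j := by rw [← pow_mul, ← pow_mul]; ring_nf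
        exact (pow_le_pow_iff_left₀ (pow_nonneg (hnn _) _) (pow_nonneg (hnn _) _) hjpos).mp h1
  intro j hj
  have h1 : (ε ^ (2*j)) ^ j0 ≤ (a j ^ j0) := by
    calc (ε ^ (2*j)) ^ j0 = (ε ^ (2*j0)) ^ j := by rw [← pow_mul, ← pow_mul]; ring_nf
      _ ≤ a j0 ^ j := pow_le_pow_left₀ (pow_nonneg hε _) hbase _
      _ ≤ a j ^ j0 := step2 j hj
  exact (pow_le_pow_iff_left₀ (pow_nonneg hε _) (hnn j) (by omega)).mp h1

lemma binom3 (x : ℝ) (hx : 0 ≤ x) (n : ℕ) (hn : 2 ≤ n) :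
    1 + n*x + (n*((n:ℝ)-1)/2)*x^2 ≤ (1+x)^n := by
  have h : (1+x)^n = ∑ m ∈ range (n + 1), x ^ m * 1 ^ (n - m) * (n.choose m : ℝ) := by
    rw [add_comm]; exact add_pow x 1 n
  rw [h]
  have hsub : range 3 ⊆ range (n+1) := by
    intro t ht; simp only [mem_range] at *; omega
  have h2 : ∑ m ∈ range 3, x ^ m * 1 ^ (n - m) * (n.choose m : ℝ)
      ≤ ∑ m ∈ range (n + 1), x ^ m * 1 ^ (n - m) * (n.choose m : ℝ) := by
    refine sum_le_sum_of_subset_of_nonneg hsub fun i _ _ => by positivity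
  refine le_trans (le_of_eq ?_) h2
  rw [show (3:ℕ) = 2+1 from rfl, sum_range_succ, sum_range_succ, sum_range_one]
  rw [Nat.cast_choose_two]
  simp [Nat.choose_one_right]
  ring

set_option maxHeartbeats 2000000 in
lemma core (ε : ℝ) (hε0 : 0 < ε) (hε2 : ε ≤ 1/2) (J0 K : ℕ) (hJ0 : 1 ≤ J0)
    (hK : 2*(J0:ℝ) ≤ ε*K) :
    (1 + 21*ε/50) ^ (2*K) ≤ 1 + ∑ j ∈ Icc J0 K, ((2*K).choose (2*j) : ℝ) * ε^(2*j) := by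
  set T : ℕ → ℝ := fun j => ((2*K).choose (2*j):ℝ)*ε^(2*j) with hT
  have hTnn : ∀ j, 0 ≤ T j := fun j => by rw [hT]; positivity
  have hJ0R : (1:ℝ) ≤ (J0:ℝ) := by exact_mod_cast hJ0
  have hKJR : 4*(J0:ℝ) ≤ (K:ℝ) := by
    nlinarith [mul_le_mul_of_nonneg_right hε2 (Nat.cast_nonneg K : (0:ℝ) ≤ (K:ℝ))]
  have hKJ : 4*J0 ≤ K := by exact_mod_cast hKJR
  have hJK : J0 ≤ K := by omega
  -- adjacent-term ratio in the low range
  have ratio : ∀ j, 1 ≤ j → j+1 ≤ J0 → T j ≤ 4/9 * T (j+1) := by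
    intro j hj1 hjJ
    have hjJR : (j:ℝ)+1 ≤ (J0:ℝ) := by exact_mod_cast hjJ
    have e1 : (2*K).choose (2*j+1) * (2*j+1) = (2*K).choose (2*j) * (2*K - 2*j) :=
      Nat.choose_succ_right_eq _ _
    have e2 : (2*K).choose (2*j+1+1) * (2*j+1+1) = (2*K).choose (2*j+1) * (2*K - (2*j+1)) :=
      Nat.choose_succ_right_eq _ _
    have hs1 : ((2*K - 2*j : ℕ) : ℝ) = 2*(K:ℝ) - 2*(j:ℝ) := by
      have h : 2*j ≤ 2*K := by omega
      rw [Nat.cast_sub h]; push_cast; ring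
    have hs2 : ((2*K - (2*j+1) : ℕ) : ℝ) = 2*(K:ℝ) - 2*(j:ℝ) - 1 := by
      have h : 2*j+1 ≤ 2*K := by omega
      rw [Nat.cast_sub h]; push_cast; ring
    have c1 : ((2*K).choose (2*j+1) : ℝ) * (2*(j:ℝ)+1)
        = ((2*K).choose (2*j) : ℝ) * (2*(K:ℝ) - 2*(j:ℝ)) := by
      have := congrArg (Nat.cast (R := ℝ)) e1
      push_cast at this
      rw [hs1] at this
      linear_combination this
    have c2 : ((2*K).choose (2*j+1+1) : ℝ) * (2*(j:ℝ)+2)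
        = ((2*K).choose (2*j+1) : ℝ) * (2*(K:ℝ) - 2*(j:ℝ) - 1) := by
      have := congrArg (Nat.cast (R := ℝ)) e2
      push_cast at this
      rw [hs2] at this
      linear_combination this
    set c0 : ℝ := ((2*K).choose (2*j) : ℝ) with hc0def
    set cc2 : ℝ := ((2*K).choose (2*j+1+1) : ℝ) with hc2def
    have crel : cc2 * ((2*(j:ℝ)+1)*(2*(j:ℝ)+2))
        = c0 * ((2*(K:ℝ) - 2*(j:ℝ))*(2*(K:ℝ) - 2*(j:ℝ) - 1)) := by
      linear_combination (2*(j:ℝ)+1) * c2 + (2*(K:ℝ)-2*(j:ℝ)-1) * c1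
    have hεj : ε*(j:ℝ) ≤ 1/2*(j:ℝ) :=
      mul_le_mul_of_nonneg_right hε2 (Nat.cast_nonneg j)
    have hA1 : (3:ℝ)/2*(2*(j:ℝ)+2) ≤ ε*(2*(K:ℝ)-2*(j:ℝ)) := by nlinarith [hεj]
    have hA2 : (3:ℝ)/2*(2*(j:ℝ)+1) ≤ ε*(2*(K:ℝ)-2*(j:ℝ)-1) := by nlinarith [hεj]
    have hprod : ((3:ℝ)/2*(2*(j:ℝ)+1)) * (3/2*(2*(j:ℝ)+2))
        ≤ (ε*(2*(K:ℝ)-2*(j:ℝ)-1)) * (ε*(2*(K:ℝ)-2*(j:ℝ))) := by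
      refine mul_le_mul hA2 hA1 (by positivity) (le_trans (by positivity) hA2)
    have hc0 : (0:ℝ) ≤ c0 := Nat.cast_nonneg _
    have hfinal : c0 ≤ 4/9 * (cc2 * ε^2) := by
      have hP : (0:ℝ) < (2*(j:ℝ)+1)*(2*(j:ℝ)+2) := by positivity
      have h6 := mul_le_mul_of_nonneg_left hprod hc0
      have h7 : c0 * ((9:ℝ)/4 * ((2*(j:ℝ)+1)*(2*(j:ℝ)+2)))
          ≤ ε^2 * (cc2 * ((2*(j:ℝ)+1)*(2*(j:ℝ)+2))) := by
        calc c0 * ((9:ℝ)/4 * ((2*(j:ℝ)+1)*(2*(j:ℝ)+2)))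
            = c0 * (((3:ℝ)/2*(2*(j:ℝ)+1)) * (3/2*(2*(j:ℝ)+2))) := by ring
          _ ≤ c0 * ((ε*(2*(K:ℝ)-2*(j:ℝ)-1)) * (ε*(2*(K:ℝ)-2*(j:ℝ)))) := h6
          _ = ε^2 * (c0 * ((2*(K:ℝ) - 2*(j:ℝ))*(2*(K:ℝ) - 2*(j:ℝ) - 1))) := by ring
          _ = ε^2 * (cc2 * ((2*(j:ℝ)+1)*(2*(j:ℝ)+2))) := by rw [crel]
      have h8 : c0 * ((2*(j:ℝ)+1)*(2*(j:ℝ)+2))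
          ≤ (4/9 * (cc2 * ε^2)) * ((2*(j:ℝ)+1)*(2*(j:ℝ)+2)) := by linarith [h7]
      exact le_of_mul_le_mul_right h8 hP
    have hexp : 2*(j+1) = 2*j+1+1 := by omega
    calc T j = c0 * ε^(2*j) := by simp only [hT, hc0def]
      _ ≤ (4/9 * (cc2 * ε^2)) * ε^(2*j) :=
          mul_le_mul_of_nonneg_right hfinal (by positivity)
      _ = 4/9 * (cc2 * ε^(2*j+1+1)) := by ring
      _ = 4/9 * T (j+1) := by simp only [hT, hexp, hc2def]
  have chain : ∀ d j, 1 ≤ j → j + d = J0 → T j ≤ (4/9:ℝ)^d * T J0 := by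
    intro d
    induction d with
    | zero =>
        intro j hj1 hjd
        have : j = J0 := by omega
        subst this; simp
    | succ d ih =>
        intro j hj1 hjd
        have h1 : T j ≤ 4/9 * T (j+1) := ratio j hj1 (by omega)
        have h2 : T (j+1) ≤ (4/9:ℝ)^d * T J0 := ih (j+1) (by omega) (by omega)
        calc T j ≤ 4/9 * T (j+1) := h1
          _ ≤ 4/9 * ((4/9:ℝ)^d * T J0) := by
              refine mul_le_mul_of_nonneg_left h2 (by norm_num)
          _ = (4/9:ℝ)^(d+1) * T J0 := by ring
  have geo : ∑ j ∈ Ico 1 J0, (4/9:ℝ)^(J0 - j) ≤ 4/5 := by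
    have h1 : ∑ j ∈ Ico 1 J0, (4/9:ℝ)^(J0-j) ≤ ∑ j ∈ range J0, (4/9:ℝ)^(J0-j) := by
      refine sum_le_sum_of_subset_of_nonneg ?_ fun i _ _ => by positivity
      rw [range_eq_Ico]; exact Ico_subset_Ico (by omega) le_rfl
    have h2 : ∑ j ∈ range J0, (4/9:ℝ)^(J0-j) = ∑ j ∈ range J0, (4/9:ℝ)^(j+1) := by
      rw [← Finset.sum_range_reflect]
      refine sum_congr rfl fun j hj => ?_
      simp only [mem_range] at hj
      congr 1; omega
    have h3 : ∑ j ∈ range J0, (4/9:ℝ)^j ≤ 9/5 := by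
      have hne : (4/9:ℝ) ≠ 1 := by norm_num
      rw [geom_sum_eq hne]
      have h4 : (0:ℝ) ≤ (4/9:ℝ)^J0 := by positivity
      have h5 : ((4/9:ℝ)^J0 - 1)/((4/9:ℝ) - 1) = (1 - (4/9:ℝ)^J0)/(5/9) := by ring
      rw [h5]; nlinarith
    have h6 : ∑ j ∈ range J0, (4/9:ℝ)^(j+1) = (4/9) * ∑ j ∈ range J0, (4/9:ℝ)^j := by
      rw [mul_sum]; exact sum_congr rfl fun j _ => by ring
    calc ∑ j ∈ Ico 1 J0, (4/9:ℝ)^(J0-j) ≤ ∑ j ∈ range J0, (4/9:ℝ)^(J0-j) := h1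
      _ = (4/9) * ∑ j ∈ range J0, (4/9:ℝ)^j := by rw [h2, h6]
      _ ≤ (4/9) * (9/5) := by nlinarith
      _ = 4/5 := by norm_num
  have split : ∑ j ∈ range (K+1), T j
      = (∑ j ∈ Ico 0 1, T j) + (∑ j ∈ Ico 1 J0, T j) + ∑ j ∈ Icc J0 K, T j := by
    rw [range_eq_Ico, ← Finset.Ico_add_one_right_eq_Icc]
    rw [← sum_Ico_consecutive _ (show (0:ℕ) ≤ J0 by omega) (show J0 ≤ K+1 by omega)]
    rw [← sum_Ico_consecutive _ (show (0:ℕ) ≤ 1 by omega) (show 1 ≤ J0 by omega)]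
  have hT0 : ∑ j ∈ Ico 0 1, T j = 1 := by
    rw [show Finset.Ico 0 1 = {0} from rfl, sum_singleton, hT]; simp
  have hev : ∑ j ∈ range (K+1), T j = ((1+ε)^(2*K) + (1-ε)^(2*K))/2 := even_sum_eq ε K
  have lo_le : ∑ j ∈ Ico 1 J0, T j ≤ 4/5 * T J0 := by
    calc ∑ j ∈ Ico 1 J0, T j ≤ ∑ j ∈ Ico 1 J0, (4/9:ℝ)^(J0-j) * T J0 := by
          refine sum_le_sum fun j hj => ?_
          simp only [mem_Ico] at hj
          exact chain (J0-j) j hj.1 (by omega)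
      _ = (∑ j ∈ Ico 1 J0, (4/9:ℝ)^(J0-j)) * T J0 := by rw [sum_mul]
      _ ≤ 4/5 * T J0 := mul_le_mul_of_nonneg_right geo (hTnn _)
  have TJ0_le : T J0 ≤ ∑ j ∈ Icc J0 K, T j :=
    single_le_sum (fun i _ => hTnn i) (mem_Icc.mpr ⟨le_rfl, hJK⟩)
  have h1e : (0:ℝ) ≤ (1-ε)^(2*K) := by
    have : (0:ℝ) ≤ 1 - ε := by linarith
    positivity
  have key1 : (1+ε)^(2*K) ≤ 2 + (18/5) * ∑ j ∈ Icc J0 K, T j := by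
    have := split
    rw [hev, hT0] at this
    linarith [lo_le, TJ0_le, h1e, hTnn J0]
  have hb1 : (1+21*ε/50)*(1+47*ε/100) ≤ 1+ε := by
    nlinarith [mul_le_mul_of_nonneg_left hε2 hε0.le]
  have hb2 : ((1+21*ε/50)*(1+47*ε/100))^(2*K) ≤ (1+ε)^(2*K) :=
    pow_le_pow_left₀ (by positivity) hb1 _
  have hb3 : (18/5:ℝ) ≤ (1+47*ε/100)^(2*K) := by
    have hx : (0:ℝ) ≤ 47*ε/100 := by positivity
    have hn : 2 ≤ 2*K := by omega
    have hbin := binom3 (47*ε/100) hx (2*K) hn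
    have hKc : (4:ℝ) ≤ (K:ℝ) := by linarith
    have hu : (2:ℝ) ≤ ε*(K:ℝ) := by linarith
    have hεu : ε*(ε*(K:ℝ)) ≤ (1/2)*(ε*(K:ℝ)) :=
      mul_le_mul_of_nonneg_right hε2 (by positivity)
    push_cast at hbin
    nlinarith [hbin, hu, hKc, hεu, sq_nonneg (ε*(K:ℝ) - 2)]
  have hb4 : (1+21*ε/50)^(2*K) * (18/5) ≤ (1+ε)^(2*K) := by
    calc (1+21*ε/50)^(2*K) * (18/5) ≤ (1+21*ε/50)^(2*K) * (1+47*ε/100)^(2*K) :=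
          mul_le_mul_of_nonneg_left hb3 (by positivity)
      _ = ((1+21*ε/50)*(1+47*ε/100))^(2*K) := (mul_pow _ _ _).symm
      _ ≤ (1+ε)^(2*K) := hb2
  have hpownn : (0:ℝ) ≤ (1+21*ε/50)^(2*K) := by positivity
  linarith [hb4, key1]

set_option maxHeartbeats 2000000 in
/-- if `‖g‖_{U(2,p)}² ≥ ε` for some even `p`, `ε ∈ (0,1/2]`, and `g` has
all marginals `E_z g(x,z) = 0`, then `‖1+g‖_{U(2,p')} ≥ 1 + ε/5` for every even `p' ≥ 2p/ε`. -/
theorem stmt_6 {X Y : Type*} [Fintype X] [Fintype Y] [Nonempty X] [Nonempty Y]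
    (g : X → Y → ℝ)
    (p : ℕ) (hpeven : Even p) (hp2 : 2 ≤ p)
    (ε : ℝ) (hε : ε ∈ Set.Ioc (0 : ℝ) (1 / 2))
    (hnorm : gridNorm 2 p g ^ 2 ≥ ε)
    (hmarg : ∀ x, (∑ z, g x z) = 0)
    (p' : ℕ) (hp'even : Even p') (hp' : (p' : ℝ) ≥ 2 * p / ε) :
    gridNorm 2 p' (fun x y => 1 + g x y) ≥ 1 + ε / 5 := by
  classical
  obtain ⟨hε0, hε2⟩ := hε
  have hn : (0:ℝ) < (Fintype.card X : ℝ) := by exact_mod_cast Fintype.card_pos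
  have hm : (0:ℝ) < (Fintype.card Y : ℝ) := by exact_mod_cast Fintype.card_pos
  obtain ⟨J0, hJ0eq⟩ := hpeven
  obtain ⟨K, hKeq⟩ := hp'even
  have hpJ : p = 2*J0 := by omega
  have hpK : p' = 2*K := by omega
  have hJ0pos : 1 ≤ J0 := by omega
  have hppos : 0 < p := by omega
  have hεp' : 2*(p:ℝ) ≤ ε * p' := by
    rw [ge_iff_le, div_le_iff₀ hε0] at hp'
    linarith
  have hK2 : 2*(J0:ℝ) ≤ ε*(K:ℝ) := by
    have h1 : (p:ℝ) = 2*(J0:ℝ) := by exact_mod_cast hpJ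
    have h2 : (p':ℝ) = 2*(K:ℝ) := by exact_mod_cast hpK
    rw [h1] at hεp'; rw [h2] at hεp'
    linarith
  set B : (Fin 2 → X) → ℝ := fun x => ∑ z, g (x 0) z * g (x 1) z with hB
  set μ : ℕ → ℝ := fun s => (∑ x : Fin 2 → X, B x ^ s) /
      ((Fintype.card X:ℝ)^2 * (Fintype.card Y:ℝ)^s) with hμ
  have hSsq : ∀ s : ℕ, ∑ x : Fin 2 → X, B x ^ s
      = ∑ z : Fin s → Y, (∑ u : X, ∏ j, g u (z j))^2 := by
    intro s
    calc ∑ x : Fin 2 → X, B x ^ s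
        = ∑ x : Fin 2 → X, ∑ z : Fin s → Y, (∏ j, g (x 0) (z j)) * (∏ j, g (x 1) (z j)) := by
          refine Fintype.sum_congr _ _ fun x => ?_
          simp only [hB]
          rw [Fintype.sum_pow]
          exact Fintype.sum_congr _ _ fun z => Finset.prod_mul_distrib
      _ = ∑ z : Fin s → Y, ∑ x : Fin 2 → X, (∏ j, g (x 0) (z j)) * (∏ j, g (x 1) (z j)) :=
          Finset.sum_comm
      _ = ∑ z : Fin s → Y, (∑ u : X, ∏ j, g u (z j))^2 := by
          refine Fintype.sum_congr _ _ fun z => ?_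
          rw [Fintype.sum_pow]
          exact Fintype.sum_congr _ _ fun x => by rw [Fin.prod_univ_two]
  have hμnn : ∀ s, 0 ≤ μ s := by
    intro s
    simp only [hμ]
    apply div_nonneg
    · rw [hSsq]; positivity
    · positivity
  have hμ0 : μ 0 = 1 := by
    have h1 : ∑ x : Fin 2 → X, B x ^ 0 = ((Fintype.card X:ℝ)^2) := by
      simp [Finset.card_univ, Fintype.card_fun]
    simp only [hμ, h1, pow_zero, mul_one]
    field_simp
    rw [← h1]; simp
  have hgrid : ∀ (f : X → Y → ℝ) (q : ℕ),
      gridNorm 2 q f = |(∑ x : Fin 2 → X, (∑ z, f (x 0) z * f (x 1) z) ^ q) /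
        ((Fintype.card X:ℝ)^2 * (Fintype.card Y:ℝ)^q)| ^ (1/(2*(q:ℝ))) := by
    intro f q
    rw [gridNorm, grid_inner]
    norm_num
  have hμp : ε ^ p ≤ μ p := by
    have h1 : gridNorm 2 p g = |μ p| ^ (1/(2*(p:ℝ))) := by
      rw [hgrid g p]
    have h2 : (|μ p| ^ (1/(2*(p:ℝ))))^(2:ℕ) = μ p ^ ((p:ℝ)⁻¹) := by
      rw [abs_of_nonneg (hμnn p), ← Real.rpow_natCast (μ p ^ (1/(2*(p:ℝ)))) 2,
        ← Real.rpow_mul (hμnn p)]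
      congr 1
      push_cast
      field_simp
    have h3 : ε ≤ μ p ^ ((p:ℝ)⁻¹) := by
      rw [h1] at hnorm
      rw [← h2]
      exact hnorm
    calc ε^p ≤ (μ p ^ ((p:ℝ)⁻¹))^p := pow_le_pow_left₀ hε0.le h3 p
      _ = μ p := Real.rpow_inv_natCast_pow (hμnn p) (by omega)
  have hlc : ∀ j, μ (2*(j+1)) ^ 2 ≤ μ (2*j) * μ (2*(j+2)) := by
    intro j
    have hcs : (∑ x : Fin 2 → X, B x ^ (2*(j+1)))^2
        ≤ (∑ x : Fin 2 → X, B x ^ (2*j)) * (∑ x : Fin 2 → X, B x ^ (2*(j+2))) := by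
      have key := Finset.sum_mul_sq_le_sq_mul_sq Finset.univ
        (fun x : Fin 2 → X => B x ^ j) (fun x => B x ^ (j+2))
      have e1 : ∀ x : Fin 2 → X, B x ^ j * B x ^ (j+2) = B x ^ (2*(j+1)) := fun x => by
        rw [← pow_add]; congr 1; omega
      have e2 : ∀ x : Fin 2 → X, (B x ^ j)^2 = B x ^ (2*j) := fun x => by
        rw [← pow_mul]; congr 1; omega
      have e3 : ∀ x : Fin 2 → X, (B x ^ (j+2))^2 = B x ^ (2*(j+2)) := fun x => by
        rw [← pow_mul]; congr 1; omega
      simp only [e1, e2, e3] at key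
      exact key
    simp only [hμ]
    rw [div_pow, div_mul_div_comm]
    have hdenom : ((Fintype.card X:ℝ)^2 * (Fintype.card Y:ℝ)^(2*j)) *
        ((Fintype.card X:ℝ)^2 * (Fintype.card Y:ℝ)^(2*(j+2)))
        = (((Fintype.card X:ℝ)^2 * (Fintype.card Y:ℝ)^(2*(j+1))))^2 := by
      have hYe : (Fintype.card Y:ℝ)^(2*j) * (Fintype.card Y:ℝ)^(2*(j+2))
          = ((Fintype.card Y:ℝ)^(2*(j+1)))^2 := by
        rw [← pow_add, ← pow_mul]; congr 1; omega
      calc ((Fintype.card X:ℝ)^2 * (Fintype.card Y:ℝ)^(2*j)) *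
            ((Fintype.card X:ℝ)^2 * (Fintype.card Y:ℝ)^(2*(j+2)))
          = ((Fintype.card X:ℝ)^2)^2 * ((Fintype.card Y:ℝ)^(2*j) * (Fintype.card Y:ℝ)^(2*(j+2))) := by
            ring
        _ = ((Fintype.card X:ℝ)^2)^2 * ((Fintype.card Y:ℝ)^(2*(j+1)))^2 := by rw [hYe]
        _ = (((Fintype.card X:ℝ)^2 * (Fintype.card Y:ℝ)^(2*(j+1))))^2 := by ring
    rw [hdenom]
    gcongr
  have hmoment : ∀ j, J0 ≤ j → ε^(2*j) ≤ μ (2*j) := by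
    have hbase : ε^(2*J0) ≤ μ (2*J0) := by rw [← hpJ]; exact hμp
    exact moments_ge (fun j => μ (2*j)) (by simpa using hμ0) (fun j => hμnn _)
      (fun j => hlc j) ε hε0.le J0 hJ0pos hbase
  set E : ℝ := ∑ s ∈ range (p'+1), (p'.choose s : ℝ) * μ s with hE
  have hinner : ∀ x : Fin 2 → X,
      (∑ z, (1 + g (x 0) z) * (1 + g (x 1) z)) = (Fintype.card Y:ℝ) + B x := by
    intro x
    have h1 : ∀ z, (1 + g (x 0) z) * (1 + g (x 1) z)
        = 1 + (g (x 0) z + g (x 1) z) + g (x 0) z * g (x 1) z := fun z => by ring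
    rw [Finset.sum_congr rfl fun z _ => h1 z]
    simp only [Finset.sum_add_distrib, Finset.sum_const, Finset.card_univ, nsmul_eq_mul,
      mul_one, hmarg (x 0), hmarg (x 1)]
    simp only [hB]
    ring
  have hEeq : (∑ x : Fin 2 → X, ((Fintype.card Y:ℝ) + B x) ^ p') /
      ((Fintype.card X:ℝ)^2 * (Fintype.card Y:ℝ)^p') = E := by
    have expand : ∀ x : Fin 2 → X, ((Fintype.card Y:ℝ) + B x)^p'
        = ∑ s ∈ range (p'+1), B x ^ s * (Fintype.card Y:ℝ)^(p'-s) * (p'.choose s : ℝ) := by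
      intro x; rw [add_comm]; exact add_pow _ _ _
    rw [Finset.sum_congr rfl fun x _ => expand x]
    rw [Finset.sum_comm]
    rw [Finset.sum_div, hE]
    refine Finset.sum_congr rfl fun s hs => ?_
    simp only [mem_range] at hs
    have hsplit : (Fintype.card Y:ℝ)^p' = (Fintype.card Y:ℝ)^s * (Fintype.card Y:ℝ)^(p'-s) := by
      rw [← pow_add]; congr 1; omega
    rw [← Finset.sum_mul, ← Finset.sum_mul]
    simp only [hμ]
    rw [hsplit]
    field_simp
  have hgrid' : gridNorm 2 p' (fun x y => 1 + g x y) = |E| ^ (1/(2*(p':ℝ))) := by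
    rw [hgrid (fun x y => 1 + g x y) p']
    congr 2
    rw [← hEeq]
    congr 1
    exact Fintype.sum_congr _ _ fun x => by rw [hinner x]
  have hElow : 1 + ∑ j ∈ Icc J0 K, ((2*K).choose (2*j):ℝ) * ε^(2*j) ≤ E := by
    have hsub : insert 0 ((Icc J0 K).image (fun j => 2*j)) ⊆ range (p'+1) := by
      intro s hs
      simp only [Finset.mem_insert, Finset.mem_image, mem_Icc, mem_range] at hs ⊢
      rcases hs with rfl | ⟨j, ⟨hj1, hj2⟩, rfl⟩
      · omega
      · omega
    have h0nm : (0:ℕ) ∉ (Icc J0 K).image (fun j => 2*j) := by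
      simp only [Finset.mem_image, mem_Icc]
      rintro ⟨j, ⟨hj1, hj2⟩, hj0⟩
      omega
    have hstep : ∑ s ∈ insert 0 ((Icc J0 K).image (fun j => 2*j)), (p'.choose s:ℝ) * μ s ≤ E := by
      rw [hE]
      exact sum_le_sum_of_subset_of_nonneg hsub fun i _ _ =>
        mul_nonneg (Nat.cast_nonneg _) (hμnn i)
    rw [Finset.sum_insert h0nm, Finset.sum_image (fun a _ b _ h => by omega)] at hstep
    have h0term : (p'.choose 0 : ℝ) * μ 0 = 1 := by simp [hμ0]
    rw [h0term] at hstep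
    refine le_trans ?_ hstep
    have hterm : ∀ j ∈ Icc J0 K, ((2*K).choose (2*j):ℝ) * ε^(2*j) ≤ (p'.choose (2*j):ℝ) * μ (2*j) := by
      intro j hj
      simp only [mem_Icc] at hj
      rw [hpK]
      exact mul_le_mul_of_nonneg_left (hmoment j hj.1) (Nat.cast_nonneg _)
    linarith [sum_le_sum hterm]
  have hcoreE : (1 + 21*ε/50)^(2*K) ≤ E := le_trans (core ε hε0 hε2 J0 K hJ0pos hK2) hElow
  have hp'ne : p' ≠ 0 := by
    intro h
    rw [h] at hεp'
    push_cast at hεp'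
    have : (2:ℝ) ≤ (p:ℝ) := by exact_mod_cast hp2
    nlinarith
  have hfin1 : ((1+ε/5)^2 : ℝ) ≤ 1 + 21*ε/50 := by nlinarith
  have hEget : ((1+ε/5):ℝ)^(2*p') ≤ E := by
    calc ((1+ε/5):ℝ)^(2*p') = (((1+ε/5):ℝ)^2)^(p') := by rw [pow_mul]
      _ ≤ (1+21*ε/50)^(p') := pow_le_pow_left₀ (by positivity) hfin1 _
      _ = (1+21*ε/50)^(2*K) := by rw [hpK]
      _ ≤ E := hcoreE
  have hEpos : (0:ℝ) < E := lt_of_lt_of_le (by positivity) hEget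
  rw [ge_iff_le, hgrid', abs_of_pos hEpos]
  have hne : (2*p' : ℕ) ≠ 0 := by omega
  calc 1 + ε/5 = (((1+ε/5):ℝ)^(2*p' : ℕ)) ^ ((((2*p' : ℕ):ℝ))⁻¹) :=
      (Real.pow_rpow_inv_natCast (by positivity) hne).symm
    _ ≤ E ^ ((((2*p' : ℕ):ℝ))⁻¹) := Real.rpow_le_rpow (by positivity) hEget (by positivity)
    _ = E ^ (1/(2*(p':ℝ))) := by
        congr 1
        push_cast
        rw [one_div]
end

section
/- If E_z [f(z)−1]^k ≥ 0 for all odd k ∈ ℕ, and ‖f − 1‖_{k₀} ≥ ε for some even k₀ ≥ 2 and ε ∈ [0, 1/2], then for any integer k' ≥ 2k₀/ε one has ‖f‖_{k'} ≥ 1 + ε/2. -/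
open Finset

lemma aux_quad (n : ℕ) {x : ℝ} (hx : 0 ≤ x) :
    1 + n * x + n * ((n:ℝ) - 1) / 2 * x ^ 2 ≤ (1 + x) ^ n := by
  induction n with
  | zero => simp
  | succ n ih =>
    have hn : (0:ℝ) ≤ (n:ℝ) * ((n:ℝ) - 1) := by
      rcases Nat.eq_zero_or_pos n with h | h
      · simp [h]
      · have : (1:ℝ) ≤ (n:ℝ) := by exact_mod_cast h
        nlinarith
    have h1x : (0:ℝ) ≤ 1 + x := by linarith
    have := mul_le_mul_of_nonneg_right ih h1x
    have hcube : (0:ℝ) ≤ (n:ℝ) * ((n:ℝ) - 1) * x ^ 3 :=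
      mul_nonneg hn (by positivity)
    push_cast
    calc 1 + ((n:ℝ)+1) * x + ((n:ℝ)+1) * ((n:ℝ)+1-1)/2 * x^2
        ≤ (1 + n * x + n * ((n:ℝ) - 1) / 2 * x ^ 2) * (1 + x) := by nlinarith
      _ ≤ (1 + x) ^ n * (1 + x) := this
      _ = (1 + x) ^ (n + 1) := by ring

lemma aux_jensen {Ω : Type*} [Fintype Ω] [Nonempty Ω] (h : Ω → ℝ) (hh : ∀ z, 0 ≤ h z)
    {p : ℝ} (hp : 1 ≤ p) :
    ((∑ z, h z) / (Fintype.card Ω)) ^ p ≤ (∑ z, h z ^ p) / (Fintype.card Ω) := by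
  have hc : (0:ℝ) < (Fintype.card Ω : ℝ) := by
    exact_mod_cast Fintype.card_pos
  have hw : ∑ _z : Ω, (1 / (Fintype.card Ω : ℝ)) = 1 := by
    rw [Finset.sum_const, Finset.card_univ, nsmul_eq_mul]
    field_simp
  have := (convexOn_rpow hp).map_sum_le (t := Finset.univ)
    (w := fun _ : Ω => 1 / (Fintype.card Ω : ℝ)) (p := h)
    (fun i _ => by positivity) hw (fun i _ => hh i)
  simp only [smul_eq_mul] at this
  calc ((∑ z, h z) / (Fintype.card Ω)) ^ p
      = (∑ z : Ω, 1 / (Fintype.card Ω : ℝ) * h z) ^ p := by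
        rw [← Finset.mul_sum]; ring_nf
    _ ≤ ∑ z : Ω, 1 / (Fintype.card Ω : ℝ) * h z ^ p := this
    _ = (∑ z, h z ^ p) / (Fintype.card Ω) := by
        rw [← Finset.mul_sum]; ring

lemma aux_cubic (n : ℕ) {x : ℝ} (hx : 0 ≤ x) :
    1 + n * x + n * ((n:ℝ) - 1) / 2 * x ^ 2 + n * ((n:ℝ) - 1) * ((n:ℝ) - 2) / 6 * x ^ 3
      ≤ (1 + x) ^ n := by
  induction n with
  | zero => simp
  | succ n ih =>
    have hn2 : (0:ℝ) ≤ (n:ℝ) * ((n:ℝ) - 1) := by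
      rcases Nat.lt_or_ge n 1 with h | h
      · interval_cases n <;> norm_num
      · have : (1:ℝ) ≤ (n:ℝ) := by exact_mod_cast h
        nlinarith
    have hn3 : (0:ℝ) ≤ (n:ℝ) * ((n:ℝ) - 1) * ((n:ℝ) - 2) := by
      rcases Nat.lt_or_ge n 2 with h | h
      · interval_cases n <;> norm_num
      · have : (2:ℝ) ≤ (n:ℝ) := by exact_mod_cast h
        nlinarith
    have h1x : (0:ℝ) ≤ 1 + x := by linarith
    have hmul := mul_le_mul_of_nonneg_right ih h1x
    have h4 : (0:ℝ) ≤ (n:ℝ) * ((n:ℝ) - 1) * ((n:ℝ) - 2) * x ^ 4 :=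
      mul_nonneg hn3 (by positivity)
    have h3 : (0:ℝ) ≤ (n:ℝ) * ((n:ℝ) - 1) * x ^ 3 := mul_nonneg hn2 (by positivity)
    push_cast
    calc 1 + ((n:ℝ)+1) * x + ((n:ℝ)+1) * ((n:ℝ)+1-1)/2 * x^2
          + ((n:ℝ)+1) * ((n:ℝ)+1-1) * ((n:ℝ)+1-2)/6 * x^3
        ≤ (1 + n * x + n * ((n:ℝ) - 1) / 2 * x ^ 2
            + n * ((n:ℝ) - 1) * ((n:ℝ) - 2) / 6 * x ^ 3) * (1 + x) := by nlinarith
      _ ≤ (1 + x) ^ n * (1 + x) := hmul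
      _ = (1 + x) ^ (n + 1) := by ring

lemma aux_q1 (n : ℕ) (e : ℝ) (he : 0 ≤ e) (he2 : e ≤ 1/2) (h4 : 4 ≤ e * n) :
    (4:ℝ) ≤ (1 + 2*e/5)^n := by
  have hx0 : (0:ℝ) ≤ 2*e/5 := by linarith
  have h3 := aux_cubic n (x := 2*e/5) hx0
  set u : ℝ := e * n with hu
  have hu0 : (0:ℝ) ≤ u := by linarith
  have e1 : 1 + n*(2*e/5) + n*((n:ℝ)-1)/2*(2*e/5)^2 + n*((n:ℝ)-1)*((n:ℝ)-2)/6*(2*e/5)^3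
      = 1 + (2/5)*u + (2/25)*(u^2 - u*e) + (4/375)*(u^3 - 3*u^2*e + 2*u*(e*e)) := by
    rw [hu]; ring
  have f1 : u*e ≤ (1/2)*u := by nlinarith
  have f2 : u^2*e ≤ (1/2)*u^2 := by nlinarith
  have f3 : (0:ℝ) ≤ u*(e*e) := by positivity
  have hpoly : (4:ℝ) ≤ 1 + (2/5)*u + (2/25)*(u^2 - (1/2)*u) + (4/375)*(u^3 - 3*((1/2)*u^2)) := by
    have h := h4
    nlinarith [sq_nonneg (u - 4), mul_nonneg (mul_nonneg (by linarith : (0:ℝ) ≤ u - 4) (by linarith : (0:ℝ) ≤ u - 4)) (by linarith : (0:ℝ) ≤ u - 4)]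
  calc (4:ℝ) ≤ 1 + (2/5)*u + (2/25)*(u^2 - (1/2)*u) + (4/375)*(u^3 - 3*((1/2)*u^2)) := hpoly
    _ ≤ 1 + (2/5)*u + (2/25)*(u^2 - u*e) + (4/375)*(u^3 - 3*u^2*e + 2*u*(e*e)) := by linarith
    _ = 1 + n*(2*e/5) + n*((n:ℝ)-1)/2*(2*e/5)^2 + n*((n:ℝ)-1)*((n:ℝ)-2)/6*(2*e/5)^3 := e1.symm
    _ ≤ (1 + 2*e/5)^n := h3

lemma aux_q2 (e : ℝ) (he : 0 ≤ e) (he2 : e ≤ 1/2) : (1+2*e/5)*(1+e/2) ≤ 1+e := by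
  nlinarith

lemma aux_ratio (C D y x e : ℝ) (hC : 0 < C) (hy : 0 ≤ y)
    (hid : D * ((y+1)*(y+2)) = C * (x*(x-1)))
    (h1 : 3/2*(y+2) ≤ e*x) (h2 : 3/2*(y+2) ≤ e*(x-1)) :
    2*C ≤ D*e^2 := by
  have hy2 : (0:ℝ) < (y+1)*(y+2) := by positivity
  have hq : 2*((y+1)*(y+2)) ≤ (e*x)*(e*(x-1)) := by
    nlinarith [mul_le_mul h1 h2 (by linarith) (by linarith)]
  have hq2 : C*(2*((y+1)*(y+2))) ≤ C*((e*x)*(e*(x-1))) :=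
    mul_le_mul_of_nonneg_left hq hC.le
  nlinarith [hq2, hid, hy2, mul_pos hC hy2]

/-- Kelley–Meka, Proposition 5.7: if all odd centered moments of `f` are
nonnegative and `‖f − 1‖_{k₀} ≥ ε`, then `‖f‖_{k'} ≥ 1 + ε/2` for every `k' ≥ 2k₀/ε`. -/
theorem stmt_7 {Ω : Type*} [Fintype Ω] [Nonempty Ω] (f : Ω → ℝ)
    (hodd : ∀ k : ℕ, Odd k → 0 ≤ (∑ z, (f z - 1) ^ k) / (Fintype.card Ω))
    (k₀ : ℕ) (hk₀even : Even k₀) (hk₀2 : 2 ≤ k₀)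
    (ε : ℝ) (hε0 : 0 ≤ ε) (hε2 : ε ≤ 1 / 2)
    (hnorm : ((∑ z, |f z - 1| ^ (k₀ : ℝ)) / (Fintype.card Ω)) ^ (1 / (k₀ : ℝ)) ≥ ε)
    (k' : ℕ) (hk' : (k' : ℝ) ≥ 2 * k₀ / ε) :
    ((∑ z, |f z| ^ (k' : ℝ)) / (Fintype.card Ω)) ^ (1 / (k' : ℝ)) ≥ 1 + ε / 2 := by
  have hc : (0:ℝ) < (Fintype.card Ω : ℝ) := by exact_mod_cast Fintype.card_pos
  set c : ℝ := (Fintype.card Ω : ℝ) with hcdef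
  set M : ℕ → ℝ := fun j => (∑ z, (f z - 1) ^ j) / c with hMdef
  -- all (centered) moments are nonnegative
  have hM0 : ∀ j, 0 ≤ M j := by
    intro j
    rcases Nat.even_or_odd j with hj | hj
    · apply div_nonneg _ hc.le
      exact Finset.sum_nonneg fun z _ => hj.pow_nonneg _
    · exact hodd j hj
  have hMzero : M 0 = 1 := by
    simp [hMdef, hcdef, Finset.card_univ]
  -- binomial expansion of the k'-th moment of f
  have hexp : (∑ z, f z ^ k') / c
      = ∑ j ∈ Finset.range (k' + 1), (k'.choose j : ℝ) * M j := by
    have hpt : ∀ z : Ω, f z ^ k'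
        = ∑ j ∈ Finset.range (k' + 1), (f z - 1) ^ j * (k'.choose j : ℝ) := by
      intro z
      have h := add_pow (f z - 1) (1:ℝ) k'
      simp only [one_pow, mul_one] at h
      rw [show f z - 1 + 1 = f z by ring] at h
      exact h
    calc (∑ z, f z ^ k') / c
        = (∑ j ∈ Finset.range (k' + 1), ∑ z, (f z - 1) ^ j * (k'.choose j : ℝ)) / c := by
          rw [← Finset.sum_comm]
          exact congrArg (· / c) (Finset.sum_congr rfl fun z _ => hpt z)
      _ = ∑ j ∈ Finset.range (k' + 1), (k'.choose j : ℝ) * M j := by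
          rw [Finset.sum_div]
          exact Finset.sum_congr rfl fun j _ => by
            rw [← Finset.sum_mul, hMdef]
            ring
  -- pointwise |f|^k' dominates f^k'
  have hBge : (∑ z, f z ^ k') / c ≤ (∑ z, |f z| ^ (k' : ℝ)) / c := by
    apply div_le_div_of_nonneg_right (c := c) ?_ hc.le
    exact Finset.sum_le_sum fun z _ => by
      rw [Real.rpow_natCast]
      calc f z ^ k' ≤ |f z ^ k'| := le_abs_self _
        _ = |f z| ^ k' := by rw [pow_abs]
  have hBnn : 0 ≤ (∑ z, |f z| ^ (k' : ℝ)) / c := by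
    apply div_nonneg _ hc.le
    exact Finset.sum_nonneg fun z _ => Real.rpow_nonneg (abs_nonneg _) _
  rcases eq_or_lt_of_le hε0 with hε | hε
  · -- ε = 0 case
    rw [← hε, show (1:ℝ) + 0/2 = 1 by norm_num, ge_iff_le]
    rcases Nat.eq_zero_or_pos k' with rfl | hk'pos
    · simp
    · have h1 : 1 ≤ (∑ z, f z ^ k') / c := by
        rw [hexp]
        have := Finset.single_le_sum (f := fun j => (k'.choose j : ℝ) * M j)
          (fun j _ => mul_nonneg (Nat.cast_nonneg _) (hM0 j))
          (Finset.mem_range.2 (Nat.succ_pos k'))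
        simpa [hMzero] using this
      calc (1:ℝ) = (1:ℝ) ^ (1/(k':ℝ)) := (Real.one_rpow _).symm
        _ ≤ ((∑ z, |f z| ^ (k':ℝ)) / c) ^ (1/(k':ℝ)) :=
            Real.rpow_le_rpow zero_le_one (le_trans h1 hBge) (by positivity)
  · -- main case : ε > 0
    have hk₀R : (2:ℝ) ≤ (k₀:ℝ) := by exact_mod_cast hk₀2
    have hεk : 2 * (k₀:ℝ) ≤ ε * k' := by
      rw [ge_iff_le, div_le_iff₀ hε] at hk'
      linarith
    have hk04 : (4:ℝ) ≤ ε * k' := by linarith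
    have hεk2 : ε * k' ≤ (k':ℝ) / 2 := by
      nlinarith [Nat.cast_nonneg (α := ℝ) k']
    have hkk : (k₀:ℝ) ≤ (k':ℝ) := by linarith
    have hk0k : k₀ ≤ k' := by exact_mod_cast hkk
    have hk8 : (8:ℝ) ≤ (k':ℝ) := by linarith
    have hk'ne : ((k':ℝ)) ≠ 0 := by linarith
    have hk₀ne : ((k₀:ℝ)) ≠ 0 := by linarith
    -- lower bound on the k₀-th absolute moment
    have hMbnn : 0 ≤ (∑ z, |f z - 1| ^ k₀) / c := by
      apply div_nonneg _ hc.le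
      exact Finset.sum_nonneg fun z _ => by positivity
    have hnorm' : ε ≤ ((∑ z, |f z - 1| ^ k₀) / c) ^ (1/(k₀:ℝ)) := by
      have hrw : ∑ z, |f z - 1| ^ (k₀:ℝ) = ∑ z, |f z - 1| ^ k₀ :=
        Finset.sum_congr rfl fun z _ => Real.rpow_natCast _ _
      rw [← hrw]
      exact hnorm
    have hMabs : ε ^ k₀ ≤ (∑ z, |f z - 1| ^ k₀) / c := by
      have h1 := pow_le_pow_left₀ hε0 hnorm' k₀
      rwa [← Real.rpow_natCast (((∑ z, |f z - 1| ^ k₀) / c) ^ (1/(k₀:ℝ))) k₀,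
        ← Real.rpow_mul hMbnn, one_div, inv_mul_cancel₀ hk₀ne, Real.rpow_one] at h1
    -- Jensen : lower bound on higher even moments
    have hMj : ∀ j, Even j → k₀ ≤ j → ε ^ j ≤ M j := by
      intro j hje hjk
      have hj0 : (k₀:ℝ) ≤ (j:ℝ) := by exact_mod_cast hjk
      have hk₀pos : (0:ℝ) < (k₀:ℝ) := by linarith
      have hp1 : 1 ≤ (j:ℝ)/(k₀:ℝ) := (one_le_div hk₀pos).2 hj0
      have hjen := aux_jensen (fun z => |f z - 1| ^ k₀) (fun z => by positivity) hp1
      have hkey : (k₀:ℝ) * ((j:ℝ)/(k₀:ℝ)) = (j:ℝ) := by field_simp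
      have hpt : ∀ z : Ω, ((|f z - 1| ^ k₀ : ℝ)) ^ ((j:ℝ)/(k₀:ℝ)) = (f z - 1) ^ j := by
        intro z
        rw [← Real.rpow_natCast |f z - 1| k₀, ← Real.rpow_mul (abs_nonneg _), hkey,
          Real.rpow_natCast, hje.pow_abs]
      calc ε ^ j = (ε ^ k₀) ^ ((j:ℝ)/(k₀:ℝ)) := by
            rw [← Real.rpow_natCast ε k₀, ← Real.rpow_mul hε0, hkey, Real.rpow_natCast]
        _ ≤ ((∑ z, |f z - 1| ^ k₀) / c) ^ ((j:ℝ)/(k₀:ℝ)) :=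
            Real.rpow_le_rpow (by positivity) hMabs (by positivity)
        _ ≤ (∑ z, ((fun z => |f z - 1| ^ k₀) z) ^ ((j:ℝ)/(k₀:ℝ))) / c := hjen
        _ = M j := by
            rw [hMdef]
            exact congrArg (· / c) (Finset.sum_congr rfl fun z _ => hpt z)
    -- the binomial coefficients sequence
    set A : ℕ → ℝ := fun j => (k'.choose j : ℝ) * ε ^ j with hAdef
    have hA0 : ∀ j, 0 ≤ A j := fun j => mul_nonneg (Nat.cast_nonneg _) (pow_nonneg hε0 _)
    -- growth of consecutive even terms below k₀
    have hratio : ∀ j : ℕ, j + 2 ≤ k₀ → 2 * A j ≤ A (j + 2) := by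
      intro j hj
      have hjk' : j + 2 ≤ k' := le_trans hj hk0k
      have hjR : (j:ℝ) + 2 ≤ (k₀:ℝ) := by exact_mod_cast hj
      -- choose identities
      have e1 : (k'.choose (j+1) : ℝ) * ((j:ℝ)+1) = (k'.choose j : ℝ) * ((k':ℝ) - (j:ℝ)) := by
        have := Nat.choose_succ_right_eq k' j
        have hle : j ≤ k' := by omega
        have : ((k'.choose (j+1) * (j+1) : ℕ) : ℝ) = ((k'.choose j * (k' - j) : ℕ) : ℝ) := by
          exact_mod_cast congrArg (Nat.cast (R := ℝ)) this
        rw [Nat.cast_mul, Nat.cast_mul, Nat.cast_sub hle] at this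
        push_cast at this ⊢
        linarith
      have e2 : (k'.choose (j+2) : ℝ) * ((j:ℝ)+2) = (k'.choose (j+1) : ℝ) * ((k':ℝ) - (j:ℝ) - 1) := by
        have := Nat.choose_succ_right_eq k' (j+1)
        have hle : j + 1 ≤ k' := by omega
        have : ((k'.choose (j+2) * (j+2) : ℕ) : ℝ) = ((k'.choose (j+1) * (k' - (j+1)) : ℕ) : ℝ) := by
          exact_mod_cast congrArg (Nat.cast (R := ℝ)) this
        rw [Nat.cast_mul, Nat.cast_mul, Nat.cast_sub hle] at this
        push_cast at this ⊢
        linarith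
      -- the key numeric inequality
      have hcjpos : (0:ℝ) < (k'.choose j : ℝ) := by
        exact_mod_cast Nat.choose_pos (by omega : j ≤ k')
      have hεj2 : ε * (j:ℝ) ≤ (1/2) * (j:ℝ) := by
        have := mul_le_mul_of_nonneg_right hε2 (by positivity : (0:ℝ) ≤ (j:ℝ))
        linarith
      have hA1 : 3/2*((j:ℝ)+2) ≤ ε * ((k':ℝ) - (j:ℝ)) := by
        have hexpand : ε * ((k':ℝ) - (j:ℝ)) = ε * (k':ℝ) - ε * (j:ℝ) := by ring
        rw [hexpand]
        linarith [hεk, hεj2, hjR, hk₀R]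
      have hA2 : 3/2*((j:ℝ)+2) ≤ ε * (((k':ℝ) - (j:ℝ)) - 1) := by
        have hexpand : ε * (((k':ℝ) - (j:ℝ)) - 1) = ε * (k':ℝ) - ε * (j:ℝ) - ε := by ring
        rw [hexpand]
        linarith [hεk, hεj2, hjR, hk₀R, hε2]
      have hid : (k'.choose (j+2) : ℝ) * (((j:ℝ)+1) * ((j:ℝ)+2))
          = (k'.choose j : ℝ) * (((k':ℝ) - (j:ℝ)) * (((k':ℝ) - (j:ℝ)) - 1)) := by
        have h1 := e1
        have h2 := e2
        have hj1pos : (0:ℝ) < (j:ℝ) + 1 := by positivity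
        -- from h2 : c2 * (j+2) = c1 * (k'-j-1) and h1 : c1 * (j+1) = c0 * (k'-j)
        have := congrArg (· * ((j:ℝ)+1)) h2
        calc (k'.choose (j+2) : ℝ) * (((j:ℝ)+1) * ((j:ℝ)+2))
            = ((k'.choose (j+2) : ℝ) * ((j:ℝ)+2)) * ((j:ℝ)+1) := by ring
          _ = ((k'.choose (j+1) : ℝ) * ((k':ℝ) - (j:ℝ) - 1)) * ((j:ℝ)+1) := by rw [e2]
          _ = ((k'.choose (j+1) : ℝ) * ((j:ℝ)+1)) * ((k':ℝ) - (j:ℝ) - 1) := by ring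
          _ = ((k'.choose j : ℝ) * ((k':ℝ) - (j:ℝ))) * ((k':ℝ) - (j:ℝ) - 1) := by rw [e1]
          _ = (k'.choose j : ℝ) * (((k':ℝ) - (j:ℝ)) * (((k':ℝ) - (j:ℝ)) - 1)) := by ring
      have hfin : 2 * (k'.choose j : ℝ) ≤ (k'.choose (j+2) : ℝ) * ε ^ 2 :=
        aux_ratio _ _ _ _ _ hcjpos (by positivity) hid hA1 hA2
      have hεj : (0:ℝ) ≤ ε ^ j := pow_nonneg hε0 _
      calc 2 * A j = (2 * (k'.choose j : ℝ)) * ε ^ j := by rw [hAdef]; ring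
        _ ≤ ((k'.choose (j+2) : ℝ) * ε ^ 2) * ε ^ j := mul_le_mul_of_nonneg_right hfin hεj
        _ = A (j + 2) := by rw [hAdef]; ring
    -- geometric bound on the head of the even part
    have hhead : ∀ t : ℕ, 2 * t ≤ k₀ → ∑ i ∈ Finset.range t, A (2 * i) ≤ A (2 * t) := by
      intro t
      induction t with
      | zero => intro _; simpa using hA0 0
      | succ t ih =>
        intro h
        have h2 : 2 * t ≤ k₀ := by omega
        have hr := hratio (2 * t) (by omega)
        rw [Finset.sum_range_succ]
        calc ∑ i ∈ Finset.range t, A (2 * i) + A (2 * t)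
            ≤ A (2 * t) + A (2 * t) := by linarith [ih h2]
          _ = 2 * A (2 * t) := by ring
          _ ≤ A (2 * t + 2) := hr
          _ = A (2 * (t + 1)) := by ring_nf
    -- sum of A over all of range (k'+1)
    have hall : ∑ j ∈ Finset.range (k'+1), A j = (1+ε)^k' := by
      rw [show (1:ℝ)+ε = ε+1 by ring, add_pow]
      exact Finset.sum_congr rfl fun j _ => by rw [hAdef, one_pow, mul_one]; ring
    have halt : ∑ j ∈ Finset.range (k'+1), (-1:ℝ)^j * A j = (1-ε)^k' := by
      rw [show (1:ℝ)-ε = (-ε)+1 by ring, add_pow]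
      refine Finset.sum_congr rfl fun j _ => ?_
      rw [hAdef, one_pow, mul_one, neg_pow]
      ring
    have h2E : 2 * ∑ j ∈ (Finset.range (k'+1)).filter (fun j => Even j), A j
        = (1+ε)^k' + (1-ε)^k' := by
      rw [← hall, ← halt,
        ← Finset.sum_filter_add_sum_filter_not (Finset.range (k'+1)) (fun j => Even j) A,
        ← Finset.sum_filter_add_sum_filter_not (Finset.range (k'+1)) (fun j => Even j)
          (fun j => (-1:ℝ)^j * A j)]
      have he1 : ∑ j ∈ (Finset.range (k'+1)).filter (fun j => Even j), (-1:ℝ)^j * A j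
          = ∑ j ∈ (Finset.range (k'+1)).filter (fun j => Even j), A j := by
        refine Finset.sum_congr rfl fun j hj => ?_
        have : Even j := (Finset.mem_filter.1 hj).2
        rw [this.neg_one_pow, one_mul]
      have he2 : ∑ j ∈ (Finset.range (k'+1)).filter (fun j => ¬ Even j), (-1:ℝ)^j * A j
          = - ∑ j ∈ (Finset.range (k'+1)).filter (fun j => ¬ Even j), A j := by
        rw [← Finset.sum_neg_distrib]
        refine Finset.sum_congr rfl fun j hj => ?_
        have : Odd j := Nat.not_even_iff_odd.1 (Finset.mem_filter.1 hj).2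
        rw [this.neg_one_pow]
        ring
      rw [he1, he2]
      ring
    have h1mε : (0:ℝ) ≤ (1-ε)^k' := pow_nonneg (by linarith) _
    -- split the even part at k₀
    have hES := Finset.sum_filter_add_sum_filter_not
      ((Finset.range (k'+1)).filter (fun j => Even j)) (fun j => k₀ ≤ j) A
    rw [Finset.filter_filter, Finset.filter_filter] at hES
    -- the head : even indices below k₀
    obtain ⟨m, hm⟩ := hk₀even
    have hk₀m : k₀ = 2 * m := by omega
    have hHset : (Finset.range (k'+1)).filter (fun j => Even j ∧ ¬ k₀ ≤ j)
        = Finset.image (fun i => 2*i) (Finset.range m) := by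
      ext j
      simp only [Finset.mem_filter, Finset.mem_image, Finset.mem_range]
      constructor
      · rintro ⟨hj1, ⟨r, hr⟩, hj3⟩
        exact ⟨r, by omega, by omega⟩
      · rintro ⟨i, hi, rfl⟩
        exact ⟨by omega, ⟨i, by omega⟩, by omega⟩
    have hhead' : ∑ j ∈ (Finset.range (k'+1)).filter (fun j => Even j ∧ ¬ k₀ ≤ j), A j ≤ A k₀ := by
      rw [hHset, Finset.sum_image (fun i _ i' _ h => by omega)]
      calc ∑ i ∈ Finset.range m, A (2*i) ≤ A (2*m) := hhead m (by omega)
        _ = A k₀ := by rw [hk₀m]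
    have hk₀mem : k₀ ∈ (Finset.range (k'+1)).filter (fun j => Even j ∧ k₀ ≤ j) :=
      Finset.mem_filter.2 ⟨Finset.mem_range.2 (by omega), ⟨m, hm⟩, le_refl _⟩
    have hAk₀T : A k₀ ≤ ∑ j ∈ (Finset.range (k'+1)).filter (fun j => Even j ∧ k₀ ≤ j), A j :=
      Finset.single_le_sum (fun j _ => hA0 j) hk₀mem
    -- the tail sum is at least (1+ε)^k' / 4
    have hT : (1+ε)^k' / 4 ≤ ∑ j ∈ (Finset.range (k'+1)).filter (fun j => Even j ∧ k₀ ≤ j), A j := by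
      linarith
    -- compare tail of A with tail of moments
    have hS'M : ∑ j ∈ (Finset.range (k'+1)).filter (fun j => Even j ∧ k₀ ≤ j), A j
        ≤ ∑ j ∈ (Finset.range (k'+1)).filter (fun j => Even j ∧ k₀ ≤ j), (k'.choose j : ℝ) * M j := by
      refine Finset.sum_le_sum fun j hj => ?_
      obtain ⟨_, hje, hjk⟩ := Finset.mem_filter.1 hj
      rw [hAdef]
      exact mul_le_mul_of_nonneg_left (hMj j hje hjk) (Nat.cast_nonneg _)
    -- insert the j = 0 term and extend to the full expansion
    have h0notmem : 0 ∉ (Finset.range (k'+1)).filter (fun j => Even j ∧ k₀ ≤ j) := by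
      simp only [Finset.mem_filter]
      rintro ⟨-, -, h⟩
      omega
    have hsub : 1 + ∑ j ∈ (Finset.range (k'+1)).filter (fun j => Even j ∧ k₀ ≤ j), (k'.choose j : ℝ) * M j
        ≤ ∑ j ∈ Finset.range (k'+1), (k'.choose j : ℝ) * M j := by
      have hins : insert 0 ((Finset.range (k'+1)).filter (fun j => Even j ∧ k₀ ≤ j))
          ⊆ Finset.range (k'+1) := by
        intro j hj
        rcases Finset.mem_insert.1 hj with rfl | hj
        · exact Finset.mem_range.2 (by omega)
        · exact Finset.mem_of_mem_filter _ hj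
      calc 1 + ∑ j ∈ (Finset.range (k'+1)).filter (fun j => Even j ∧ k₀ ≤ j), (k'.choose j : ℝ) * M j
          = ∑ j ∈ insert 0 ((Finset.range (k'+1)).filter (fun j => Even j ∧ k₀ ≤ j)),
              (k'.choose j : ℝ) * M j := by
            rw [Finset.sum_insert h0notmem, Nat.choose_zero_right, hMzero]
            norm_num
        _ ≤ ∑ j ∈ Finset.range (k'+1), (k'.choose j : ℝ) * M j :=
            Finset.sum_le_sum_of_subset_of_nonneg hins
              (fun j _ _ => mul_nonneg (Nat.cast_nonneg _) (hM0 j))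
    -- numeric endgame
    have hQ1 : (4:ℝ) ≤ (1+2*ε/5)^k' := aux_q1 k' ε hε0 hε2 hk04
    have hQ2 : (1+2*ε/5)*(1+ε/2) ≤ 1+ε := aux_q2 ε hε0 hε2
    have hQ : (4:ℝ) * (1+ε/2)^k' ≤ (1+ε)^k' := by
      calc (4:ℝ) * (1+ε/2)^k' ≤ (1+2*ε/5)^k' * (1+ε/2)^k' :=
            mul_le_mul_of_nonneg_right hQ1 (by positivity)
        _ = ((1+2*ε/5)*(1+ε/2))^k' := (mul_pow _ _ _).symm
        _ ≤ (1+ε)^k' := pow_le_pow_left₀ (by positivity) hQ2 k'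
    have hmain : (1+ε/2)^k' ≤ (∑ z, f z ^ k') / c := by
      rw [hexp]
      have c1 : (1+ε/2)^k' ≤ 1 + (1+ε)^k' / 4 := by linarith
      calc (1+ε/2)^k' ≤ 1 + (1+ε)^k' / 4 := c1
        _ ≤ 1 + ∑ j ∈ (Finset.range (k'+1)).filter (fun j => Even j ∧ k₀ ≤ j), A j := by linarith
        _ ≤ 1 + ∑ j ∈ (Finset.range (k'+1)).filter (fun j => Even j ∧ k₀ ≤ j),
              (k'.choose j : ℝ) * M j := by linarith
        _ ≤ ∑ j ∈ Finset.range (k'+1), (k'.choose j : ℝ) * M j := hsub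
    -- conclude by taking k'-th roots
    have hB : (1+ε/2)^k' ≤ (∑ z, |f z| ^ (k':ℝ)) / c := le_trans hmain hBge
    have hfin := Real.rpow_le_rpow (by positivity) hB (by positivity : (0:ℝ) ≤ 1/(k':ℝ))
    rwa [← Real.rpow_natCast (1+ε/2) k', ← Real.rpow_mul (by linarith : (0:ℝ) ≤ 1+ε/2),
      mul_one_div_cancel hk'ne, Real.rpow_one] at hfin
end

section
/- Triangle/seminorm property of grid norms: for even positive integers k and p, the map f ↦ ‖f‖_{U(k,p)} is a seminorm on real-valued functions on X × Y; in particular ‖f + g‖_{U(k,p)} ≤ ‖f‖_{U(k,p)} + ‖g‖_{U(k,p)} for all f, g : X × Y → ℝ. -/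
open Finset

/-- Finite Hölder: `n` nonneg functions, all with exponent `n`. -/
lemma my_holder {ι : Type*} (s : Finset ι) {n : ℕ} (hn : 0 < n) (u : Fin n → ι → ℝ)
    (hu : ∀ j i, i ∈ s → 0 ≤ u j i) :
    ∑ i ∈ s, ∏ j, u j i ≤ ∏ j, (∑ i ∈ s, u j i ^ n) ^ (1 / (n : ℝ)) := by
  have hn' : (n : ℝ) ≠ 0 := Nat.cast_ne_zero.2 hn.ne'
  set A : Fin n → ℝ := fun j => ∑ i ∈ s, u j i ^ n with hA
  have hA0 : ∀ j, 0 ≤ A j := fun j =>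
    Finset.sum_nonneg fun i hi => pow_nonneg (hu j i hi) n
  by_cases hz : ∃ j, A j = 0
  · obtain ⟨j0, hj0⟩ := hz
    have hu0 : ∀ i ∈ s, u j0 i = 0 := by
      intro i hi
      have := (Finset.sum_eq_zero_iff_of_nonneg
        (fun i hi => pow_nonneg (hu j0 i hi) n)).1 hj0 i hi
      exact pow_eq_zero_iff hn.ne' |>.1 this
    have hL : ∑ i ∈ s, ∏ j, u j i = 0 := by
      apply Finset.sum_eq_zero
      intro i hi
      exact Finset.prod_eq_zero (Finset.mem_univ j0) (hu0 i hi)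
    have hR : (0:ℝ) ≤ ∏ j, (A j) ^ (1 / (n : ℝ)) :=
      Finset.prod_nonneg fun j _ => Real.rpow_nonneg (hA0 j) _
    rw [hL]; exact hR
  · push_neg at hz
    have hApos : ∀ j, 0 < A j := fun j => lt_of_le_of_ne (hA0 j) (Ne.symm (hz j))
    set N : Fin n → ℝ := fun j => (A j) ^ (1 / (n : ℝ)) with hN
    have hNpos : ∀ j, 0 < N j := fun j => Real.rpow_pos_of_pos (hApos j) _
    have hNpow : ∀ j, (N j) ^ n = A j := by
      intro j
      rw [hN]
      simp only [one_div]
      exact Real.rpow_inv_natCast_pow (hA0 j) hn.ne'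
    -- pointwise AM-GM
    have key : ∀ i ∈ s, ∏ j, (u j i / N j) ≤ ∑ j, (1 / (n:ℝ)) * ((u j i / N j) ^ n) := by
      intro i hi
      have := Real.geom_mean_le_arith_mean_weighted Finset.univ
        (fun _ : Fin n => 1 / (n:ℝ)) (fun j => (u j i / N j) ^ n)
        (fun j _ => by positivity)
        (by rw [Finset.sum_const, Finset.card_univ, Fintype.card_fin, nsmul_eq_mul]; field_simp)
        (fun j _ => pow_nonneg (div_nonneg (hu j i hi) (hNpos j).le) n)
      calc ∏ j, (u j i / N j)
          = ∏ j, ((u j i / N j) ^ n) ^ (1 / (n:ℝ)) := by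
            apply Finset.prod_congr rfl
            intro j _
            rw [one_div, Real.pow_rpow_inv_natCast (div_nonneg (hu j i hi) (hNpos j).le) hn.ne']
        _ ≤ _ := this
    have sumv : ∀ j, ∑ i ∈ s, (u j i / N j) ^ n = 1 := by
      intro j
      have : ∑ i ∈ s, (u j i / N j) ^ n = (∑ i ∈ s, u j i ^ n) / (N j) ^ n := by
        rw [Finset.sum_div]
        exact Finset.sum_congr rfl fun i _ => div_pow _ _ _
      rw [this, hNpow]
      exact div_self (hApos j).ne'
    have main : ∑ i ∈ s, ∏ j, (u j i / N j) ≤ 1 := by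
      calc ∑ i ∈ s, ∏ j, (u j i / N j)
          ≤ ∑ i ∈ s, ∑ j, (1/(n:ℝ)) * ((u j i / N j) ^ n) :=
            Finset.sum_le_sum key
        _ = ∑ j : Fin n, (1/(n:ℝ)) * ∑ i ∈ s, (u j i / N j) ^ n := by
            rw [Finset.sum_comm]
            exact Finset.sum_congr rfl fun j _ => by rw [Finset.mul_sum]
        _ = 1 := by
            simp only [sumv, mul_one]
            rw [Finset.sum_const, Finset.card_univ, Fintype.card_fin, nsmul_eq_mul]
            field_simp
    have expand : ∑ i ∈ s, ∏ j, u j i = (∏ j, N j) * ∑ i ∈ s, ∏ j, (u j i / N j) := by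
      rw [Finset.mul_sum]
      apply Finset.sum_congr rfl
      intro i _
      rw [← Finset.prod_mul_distrib]
      apply Finset.prod_congr rfl
      intro j _
      rw [← mul_div_assoc]; exact (mul_div_cancel_left₀ (u j i) (hNpos j).ne').symm
    rw [expand]
    calc (∏ j, N j) * ∑ i ∈ s, ∏ j, (u j i / N j)
        ≤ (∏ j, N j) * 1 :=
          mul_le_mul_of_nonneg_left main (Finset.prod_nonneg fun j _ => (hNpos j).le)
      _ = ∏ j, N j := mul_one _

section Grid
variable {X Y : Type*} [Fintype X] [Fintype Y]

/-- Generalized grid sum of a matrix of functions. -/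
def gS (k p : ℕ) (F : Fin k → Fin p → X → Y → ℝ) : ℝ :=
  ∑ x : Fin k → X, ∑ y : Fin p → Y, ∏ i, ∏ j, F i j (x i) (y j)

lemma sum_pi_prod {n : ℕ} {α : Type*} [Fintype α] (g : Fin n → α → ℝ) :
    ∑ y : Fin n → α, ∏ j, g j (y j) = ∏ j, ∑ a : α, g j a := by
  rw [Finset.prod_univ_sum, Fintype.piFinset_univ]

lemma col_fact {k p : ℕ} (F : Fin k → Fin p → X → Y → ℝ) :
    gS k p F = ∑ x : Fin k → X, ∏ j, ∑ y : Y, ∏ i, F i j (x i) y := by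
  unfold gS
  apply Finset.sum_congr rfl
  intro x _
  rw [← sum_pi_prod (fun j y => ∏ i, F i j (x i) y)]
  apply Finset.sum_congr rfl
  intro y _
  exact Finset.prod_comm

lemma row_fact {k p : ℕ} (F : Fin k → Fin p → X → Y → ℝ) :
    gS k p F = ∑ y : Fin p → Y, ∏ i, ∑ x : X, ∏ j, F i j x (y j) := by
  unfold gS
  rw [Finset.sum_comm]
  apply Finset.sum_congr rfl
  intro y _
  exact sum_pi_prod (fun i x => ∏ j, F i j x (y j))

/-- The (unnormalized) grid sum of a single function. -/
def T (k p : ℕ) (f : X → Y → ℝ) : ℝ := gS k p (fun _ _ => f)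

lemma T_eq (k p : ℕ) (f : X → Y → ℝ) :
    T k p f = ∑ y : Fin p → Y, (∑ x : X, ∏ j, f x (y j)) ^ k := by
  rw [T, row_fact]
  apply Finset.sum_congr rfl
  intro y _
  rw [Finset.prod_const, Finset.card_univ, Fintype.card_fin]

lemma T_nonneg {k : ℕ} (p : ℕ) (hkeven : Even k) (f : X → Y → ℝ) :
    0 ≤ T k p f := by
  rw [T_eq]
  exact Finset.sum_nonneg fun y _ => hkeven.pow_nonneg _

/-- Step 2: GCS for row-constant matrices. -/
lemma step2 {k : ℕ} (p : ℕ) (hkeven : Even k) (hk : 0 < k) (G : Fin k → X → Y → ℝ) :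
    |gS k p (fun i _ => G i)| ≤ ∏ i, (T k p (G i)) ^ (1 / (k : ℝ)) := by
  rw [row_fact]
  set R : Fin k → (Fin p → Y) → ℝ := fun i y => ∑ x : X, ∏ j, G i x (y j) with hR
  calc |∑ y : Fin p → Y, ∏ i, R i y|
      ≤ ∑ y : Fin p → Y, |∏ i, R i y| := Finset.abs_sum_le_sum_abs _ _
    _ = ∑ y : Fin p → Y, ∏ i, |R i y| := by
        exact Finset.sum_congr rfl fun y _ => Finset.abs_prod _ _
    _ ≤ ∏ i, (∑ y : Fin p → Y, |R i y| ^ k) ^ (1 / (k:ℝ)) :=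
        my_holder _ hk _ (fun i y _ => abs_nonneg _)
    _ = ∏ i, (T k p (G i)) ^ (1 / (k:ℝ)) := by
        apply Finset.prod_congr rfl
        intro i _
        congr 1
        rw [T_eq]
        exact Finset.sum_congr rfl fun y _ => hkeven.pow_abs _

/-- Gowers–Cauchy–Schwarz for grid sums. -/
lemma gcs {k p : ℕ} (hkeven : Even k) (hk : 0 < k) (hpeven : Even p) (hp : 0 < p)
    (F : Fin k → Fin p → X → Y → ℝ) :
    |gS k p F| ≤ ∏ i, ∏ j, (T k p (F i j)) ^ (1 / ((k : ℝ) * (p : ℝ))) := by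
  rw [col_fact]
  set C : Fin p → (Fin k → X) → ℝ := fun j x => ∑ y : Y, ∏ i, F i j (x i) y with hC
  have hB : ∀ j, ∑ x : Fin k → X, (C j x) ^ p = gS k p (fun i _ => F i j) := by
    intro j
    unfold gS
    apply Finset.sum_congr rfl
    intro x _
    have : (C j x) ^ p = ∏ j' : Fin p, ∑ y : Y, ∏ i, F i j (x i) y := by
      rw [Finset.prod_const, Finset.card_univ, Fintype.card_fin]
    rw [this, ← sum_pi_prod (fun _ y => ∏ i, F i j (x i) y)]
    exact Finset.sum_congr rfl fun y _ => Finset.prod_comm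
  have hBnn : ∀ j, 0 ≤ ∑ x : Fin k → X, (C j x) ^ p :=
    fun j => Finset.sum_nonneg fun x _ => hpeven.pow_nonneg _
  calc |∑ x : Fin k → X, ∏ j, C j x|
      ≤ ∑ x : Fin k → X, ∏ j, |C j x| := by
        refine le_trans (Finset.abs_sum_le_sum_abs _ _) (le_of_eq ?_)
        exact Finset.sum_congr rfl fun x _ => Finset.abs_prod _ _
    _ ≤ ∏ j, (∑ x : Fin k → X, |C j x| ^ p) ^ (1 / (p:ℝ)) :=
        my_holder _ hp _ (fun j x _ => abs_nonneg _)
    _ = ∏ j, (∑ x : Fin k → X, (C j x) ^ p) ^ (1 / (p:ℝ)) := by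
        apply Finset.prod_congr rfl
        intro j _
        congr 1
        exact Finset.sum_congr rfl fun x _ => hpeven.pow_abs _
    _ ≤ ∏ j, (∏ i, (T k p (F i j)) ^ (1 / (k:ℝ))) ^ (1 / (p:ℝ)) := by
        apply Finset.prod_le_prod
        · intro j _
          exact Real.rpow_nonneg (hBnn j) _
        · intro j _
          apply Real.rpow_le_rpow (hBnn j) _ (by positivity)
          calc ∑ x : Fin k → X, (C j x) ^ p
              = |gS k p (fun i _ => F i j)| := by
                rw [hB j]
                exact (abs_of_nonneg (by rw [← hB j]; exact hBnn j)).symm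
            _ ≤ _ := step2 p hkeven hk _
    _ = ∏ i, ∏ j, (T k p (F i j)) ^ (1 / ((k:ℝ) * (p:ℝ))) := by
        rw [Finset.prod_comm]
        apply Finset.prod_congr rfl
        intro j _
        rw [← Real.finset_prod_rpow _ _
          (fun i _ => Real.rpow_nonneg (T_nonneg p hkeven _) _)]
        apply Finset.prod_congr rfl
        intro i _
        rw [← Real.rpow_mul (T_nonneg p hkeven _)]
        congr 1
        rw [div_mul_div_comm, one_mul]

end Grid

section Tri
variable {X Y : Type*} [Fintype X] [Fintype Y]

lemma T_add_le {k p : ℕ} (hkeven : Even k) (hk : 0 < k) (hpeven : Even p) (hp : 0 < p)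
    (f g : X → Y → ℝ) :
    T k p (fun x y => f x y + g x y) ≤
      ((T k p f) ^ (1 / ((k:ℝ) * (p:ℝ))) + (T k p g) ^ (1 / ((k:ℝ) * (p:ℝ)))) ^ (k * p) := by
  set e : ℝ := 1 / ((k:ℝ) * (p:ℝ)) with he
  set a := (T k p f) ^ e with ha
  set b := (T k p g) ^ e with hb
  have ha0 : 0 ≤ a := Real.rpow_nonneg (T_nonneg p hkeven f) _
  have hb0 : 0 ≤ b := Real.rpow_nonneg (T_nonneg p hkeven g) _
  classical
  set Fm : Finset (Fin k × Fin p) → Fin k → Fin p → X → Y → ℝ :=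
    fun t i j => if (i, j) ∈ t then f else g with hFm
  have prod_split : ∀ (t : Finset (Fin k × Fin p)) (h : Fin k × Fin p → ℝ)
      (h' : Fin k × Fin p → ℝ),
      ∏ z : Fin k × Fin p, (if z ∈ t then h z else h' z)
        = (∏ z ∈ t, h z) * ∏ z ∈ Finset.univ \ t, h' z := by
    intro t h h'
    rw [Finset.prod_ite, Finset.filter_mem_eq_inter, Finset.univ_inter, Finset.filter_not,
      Finset.filter_mem_eq_inter, Finset.univ_inter]
  have inner : ∀ (x : Fin k → X) (y : Fin p → Y),
      ∏ i, ∏ j, (f (x i) (y j) + g (x i) (y j))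
        = ∑ t ∈ (Finset.univ : Finset (Fin k × Fin p)).powerset,
            ∏ i, ∏ j, Fm t i j (x i) (y j) := by
    intro x y
    rw [← Fintype.prod_prod_type'
      (fun i j => f (x i) (y j) + g (x i) (y j)), Finset.prod_add]
    apply Finset.sum_congr rfl
    intro t _
    rw [← Fintype.prod_prod_type' (fun i j => Fm t i j (x i) (y j))]
    rw [show (fun z : Fin k × Fin p => Fm t z.1 z.2 (x z.1) (y z.2))
        = fun z : Fin k × Fin p =>
            (if z ∈ t then f (x z.1) (y z.2) else g (x z.1) (y z.2)) from ?_]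
    · exact (prod_split t _ _).symm
    · funext z
      obtain ⟨i, j⟩ := z
      simp only [hFm]
      by_cases hz : (i, j) ∈ t
      · simp [hz]
      · simp [hz]
  have expand : T k p (fun x y => f x y + g x y)
      = ∑ t ∈ (Finset.univ : Finset (Fin k × Fin p)).powerset, gS k p (Fm t) := by
    unfold T gS
    calc ∑ x : Fin k → X, ∑ y : Fin p → Y, ∏ i, ∏ j, (f (x i) (y j) + g (x i) (y j))
        = ∑ x : Fin k → X, ∑ y : Fin p → Y,
            ∑ t ∈ (Finset.univ : Finset (Fin k × Fin p)).powerset,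
              ∏ i, ∏ j, Fm t i j (x i) (y j) :=
          Finset.sum_congr rfl fun x _ => Finset.sum_congr rfl fun y _ => inner x y
      _ = ∑ x : Fin k → X, ∑ t ∈ (Finset.univ : Finset (Fin k × Fin p)).powerset,
            ∑ y : Fin p → Y, ∏ i, ∏ j, Fm t i j (x i) (y j) :=
          Finset.sum_congr rfl fun x _ => Finset.sum_comm
      _ = _ := Finset.sum_comm
  have bound : ∀ t ∈ (Finset.univ : Finset (Fin k × Fin p)).powerset,
      gS k p (Fm t) ≤ (∏ z ∈ t, a) * ∏ z ∈ Finset.univ \ t, b := by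
    intro t _
    calc gS k p (Fm t) ≤ |gS k p (Fm t)| := le_abs_self _
      _ ≤ ∏ i, ∏ j, (T k p (Fm t i j)) ^ e := gcs hkeven hk hpeven hp _
      _ = ∏ z : Fin k × Fin p, (if z ∈ t then a else b) := by
          rw [← Fintype.prod_prod_type' (fun i j => (T k p (Fm t i j)) ^ e)]
          apply Finset.prod_congr rfl
          intro z _
          obtain ⟨i, j⟩ := z
          simp only [hFm]
          by_cases hz : (i, j) ∈ t
          · simp [hz, ha]
          · simp [hz, hb]
      _ = (∏ z ∈ t, a) * ∏ z ∈ Finset.univ \ t, b := prod_split t _ _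
  calc T k p (fun x y => f x y + g x y)
      = ∑ t ∈ (Finset.univ : Finset (Fin k × Fin p)).powerset, gS k p (Fm t) := expand
    _ ≤ ∑ t ∈ (Finset.univ : Finset (Fin k × Fin p)).powerset,
          (∏ z ∈ t, a) * ∏ z ∈ Finset.univ \ t, b := Finset.sum_le_sum bound
    _ = ∏ z : Fin k × Fin p, (a + b) := (Finset.prod_add _ _ _).symm
    _ = (a + b) ^ (k * p) := by
        rw [Finset.prod_const, Finset.card_univ, Fintype.card_prod,
          Fintype.card_fin, Fintype.card_fin]

end Tri

/-- for even positive `k` and `p`, `f ↦ ‖f‖_{U(k,p)}` is a seminorm: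
it is absolutely homogeneous and satisfies the triangle inequality. -/
theorem stmt_14 {X Y : Type*} [Fintype X] [Fintype Y] [Nonempty X] [Nonempty Y]
    (k p : ℕ) (hkeven : Even k) (hk : 0 < k) (hpeven : Even p) (hp : 0 < p) :
    (∀ (c : ℝ) (f : X → Y → ℝ),
        gridNorm k p (fun x y => c * f x y) = |c| * gridNorm k p f) ∧
    (∀ f g : X → Y → ℝ,
        gridNorm k p (fun x y => f x y + g x y) ≤ gridNorm k p f + gridNorm k p g) := by
  have hkp : (k * p : ℕ) ≠ 0 := Nat.mul_ne_zero hk.ne' hp.ne'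
  have hkpe : Even (k * p) := hkeven.mul_right p
  set D : ℝ := (Fintype.card X : ℝ) ^ k * (Fintype.card Y : ℝ) ^ p with hD
  have hcX : (0:ℝ) < (Fintype.card X : ℝ) := by exact_mod_cast Fintype.card_pos
  have hcY : (0:ℝ) < (Fintype.card Y : ℝ) := by exact_mod_cast Fintype.card_pos
  have hDpos : 0 < D := mul_pos (pow_pos hcX k) (pow_pos hcY p)
  set e : ℝ := 1 / ((k:ℝ) * (p:ℝ)) with he
  have hexp : e = ((k*p : ℕ) : ℝ)⁻¹ := by rw [he, one_div]; push_cast; ring_nf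
  have hnum : ∀ h : X → Y → ℝ, gridNorm k p h = (T k p h / D) ^ e := by
    intro h
    have h1 : gridNorm k p h = |T k p h / D| ^ e := rfl
    rw [h1, abs_of_nonneg (div_nonneg (T_nonneg p hkeven h) hDpos.le)]
  constructor
  · -- homogeneity
    intro c f
    have hpt : ∀ (x : Fin k → X) (y : Fin p → Y),
        ∏ i, ∏ j, (c * f (x i) (y j)) = c ^ (k*p) * ∏ i, ∏ j, f (x i) (y j) := by
      intro x y
      rw [← Fintype.prod_prod_type' (fun i j => c * f (x i) (y j)),
        ← Fintype.prod_prod_type' (fun i j => f (x i) (y j)),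
        Finset.prod_mul_distrib, Finset.prod_const, Finset.card_univ,
        Fintype.card_prod, Fintype.card_fin, Fintype.card_fin]
    have hscale : T k p (fun x y => c * f x y) = c ^ (k*p) * T k p f := by
      unfold T gS
      simp only [hpt, ← Finset.mul_sum]
    rw [hnum, hnum, hscale]
    have : c ^ (k*p) * T k p f / D = |c| ^ (k*p) * (T k p f / D) := by
      rw [← hkpe.pow_abs c]; ring
    rw [this, Real.mul_rpow (pow_nonneg (abs_nonneg c) _)
      (div_nonneg (T_nonneg p hkeven f) hDpos.le), hexp,
      Real.pow_rpow_inv_natCast (abs_nonneg c) hkp]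
  · -- triangle inequality
    intro f g
    rw [hnum, hnum, hnum]
    set a := (T k p f) ^ e with ha
    set b := (T k p g) ^ e with hb
    have ha0 : 0 ≤ a := Real.rpow_nonneg (T_nonneg p hkeven f) _
    have hb0 : 0 ≤ b := Real.rpow_nonneg (T_nonneg p hkeven g) _
    have key : T k p (fun x y => f x y + g x y) ≤ (a + b) ^ (k * p) :=
      T_add_le hkeven hk hpeven hp f g
    have step : (T k p (fun x y => f x y + g x y) / D) ^ e
        ≤ ((a + b) ^ (k*p) / D) ^ e := by
      apply Real.rpow_le_rpow
        (div_nonneg (T_nonneg p hkeven _) hDpos.le) ?_ (by positivity)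
      gcongr
    refine step.trans (le_of_eq ?_)
    rw [Real.div_rpow (pow_nonneg (add_nonneg ha0 hb0) _) hDpos.le, hexp,
      Real.pow_rpow_inv_natCast (add_nonneg ha0 hb0) hkp, ← hexp]
    rw [Real.div_rpow (T_nonneg p hkeven f) hDpos.le,
      Real.div_rpow (T_nonneg p hkeven g) hDpos.le, ← ha, ← hb]
    ring
end

section
/- Spreadness of a quadratic-phase function in 𝔽^n: let 𝔽 be a finite field of prime order, n even, Q(y) = y₁y₂ + y₃y₄ + ⋯ + y_{n−1}y_n, and f : 𝔽^n → [0,1] defined by f(x) = 1/2 + Σ_{0≠γ∈𝔽} (1/(2|𝔽|)) e_𝔽(γ Q(x)), where e_𝔽(t) = e^{2πi t/|𝔽|} (so f is real-valued). Then every nontrivial Fourier coefficient of f satisfies |f̂(χ)| ≤ e^{−cn} for an absolute constant c > 0 depending only on |𝔽|; consequently, for all S, T ⊆ 𝔽^n, |E_{x,y ∈ 𝔽^n} 1_S(x)(f(x+y) − E[f]) 1_T(y)| ≤ e^{−cn} √(|S||T|)/|𝔽|^n. -/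
set_option maxHeartbeats 1000000
open Finset Complex

variable (q : ℕ) [NeZero q]

noncomputable def eF (q : ℕ) [NeZero q] (t : ZMod q) : ℂ :=
  Complex.exp (2 * Real.pi * Complex.I * (t.val : ℂ) / (q : ℂ))

def quadQ (q n : ℕ) (y : Fin n → ZMod q) : ZMod q :=
  ∑ i : Fin n, if h : (i : ℕ) % 2 = 0 ∧ (i : ℕ) + 1 < n then y i * y ⟨(i : ℕ) + 1, h.2⟩ else 0

noncomputable def quadF (q n : ℕ) [NeZero q] [DecidableEq (ZMod q)]
    (x : Fin n → ZMod q) : ℂ :=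
  1 / 2 + ∑ γ ∈ Finset.univ.filter (fun γ : ZMod q => γ ≠ 0),
      (1 / (2 * (q : ℂ))) * eF q (γ * quadQ q n x)

noncomputable def zeta (q : ℕ) : ℂ := Complex.exp (2 * Real.pi * Complex.I / q)

lemma eF_eq (t : ZMod q) : eF q t = zeta q ^ t.val := by
  rw [eF, zeta, ← Complex.exp_nat_mul]
  ring_nf

lemma zeta_pow_q : zeta q ^ q = 1 := by
  have hq : (q : ℂ) ≠ 0 := Nat.cast_ne_zero.mpr (NeZero.ne q)
  rw [zeta, ← Complex.exp_nat_mul]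
  rw [show (q : ℂ) * (2 * Real.pi * Complex.I / q) = 2 * Real.pi * Complex.I by
    field_simp]
  exact Complex.exp_two_pi_mul_I

lemma zeta_pow_mod (k : ℕ) : zeta q ^ (k % q) = zeta q ^ k := by
  conv_rhs => rw [← Nat.mod_add_div k q]
  rw [pow_add, pow_mul, zeta_pow_q, one_pow, mul_one]

lemma eF_zero : eF q 0 = 1 := by simp [eF_eq]

lemma eF_add (s t : ZMod q) : eF q (s + t) = eF q s * eF q t := by
  rw [eF_eq, eF_eq, eF_eq, ZMod.val_add, zeta_pow_mod, pow_add]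

lemma abs_zeta : ‖zeta q‖ = 1 := by
  rw [zeta, show 2 * Real.pi * Complex.I / q = ((2 * Real.pi / q : ℝ) : ℂ) * Complex.I by
    push_cast; ring]
  exact Complex.norm_exp_ofReal_mul_I _

lemma eF_abs (t : ZMod q) : ‖eF q t‖ = 1 := by
  rw [eF_eq, norm_pow, abs_zeta, one_pow]

lemma eF_ne_zero (t : ZMod q) : eF q t ≠ 0 := by
  intro h
  have := eF_abs q t
  rw [h] at this; simp at this

lemma eF_neg (t : ZMod q) : eF q (-t) = (eF q t)⁻¹ := by
  have h : eF q t * eF q (-t) = 1 := by rw [← eF_add]; simp [eF_zero]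
  field_simp [eF_ne_zero] at h ⊢
  linear_combination h

lemma eF_sub (s t : ZMod q) : eF q (s - t) = eF q s * (eF q t)⁻¹ := by
  rw [sub_eq_add_neg, eF_add, eF_neg]

lemma conj_eF (t : ZMod q) : (starRingEnd ℂ) (eF q t) = eF q (-t) := by
  rw [eF_neg]
  rw [inv_eq_one_div, eq_div_iff (eF_ne_zero q t), mul_comm, Complex.mul_conj]
  rw [Complex.normSq_eq_norm_sq, eF_abs]; norm_num

lemma eF_one_ne_one (hq : 1 < q) : eF q 1 ≠ 1 := by
  haveI : Fact (1 < q) := ⟨hq⟩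
  rw [eF, ZMod.val_one]
  intro h
  rw [Complex.exp_eq_one_iff] at h
  obtain ⟨n, hn⟩ := h
  have hq0 : (q : ℂ) ≠ 0 := Nat.cast_ne_zero.mpr (by omega)
  have h2 : (2 * Real.pi * Complex.I) * (1 / q : ℂ) = (2 * Real.pi * Complex.I) * n := by
    push_cast at hn
    field_simp at hn ⊢
    linear_combination hn
  have h3 : (1 / q : ℂ) = n := by
    have hne : (2 * Real.pi * Complex.I) ≠ 0 := by
      simp [Real.pi_ne_zero, Complex.I_ne_zero]
    exact mul_left_cancel₀ hne h2
  have h4 : (1 / q : ℝ) = n := by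
    have := congrArg Complex.re h3
    simpa using this
  have h5 : (0:ℝ) < 1 / q := by positivity
  have h6 : (1/q : ℝ) < 1 := by
    rw [div_lt_one (by positivity)]; exact_mod_cast hq
  rw [h4] at h5 h6
  have : (0:ℤ) < n := by exact_mod_cast h5
  have : (n:ℤ) < 1 := by exact_mod_cast h6
  omega

lemma sum_eF (hq : q.Prime) : ∑ a : ZMod q, eF q a = 0 := by
  have h1 : eF q 1 * (∑ a : ZMod q, eF q a) = ∑ a : ZMod q, eF q a := by
    rw [Finset.mul_sum]
    rw [show (∑ a : ZMod q, eF q 1 * eF q a) = ∑ a : ZMod q, eF q (1 + a) by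
      simp [eF_add]]
    exact Fintype.sum_bijective (fun a => 1 + a) (Equiv.addLeft (1 : ZMod q)).bijective _ _ (fun a => rfl)
  by_contra h
  exact eF_one_ne_one q hq.one_lt (mul_right_cancel₀ h (by rw [h1, one_mul]))

lemma sum_eF_mul (hq : q.Prime) (c : ZMod q) :
    ∑ a : ZMod q, eF q (c * a) = if c = 0 then (q : ℂ) else 0 := by
  haveI := Fact.mk hq
  split_ifs with hc
  · subst hc; simp [eF_zero, ZMod.card]
  · rw [show (∑ a : ZMod q, eF q (c * a)) = ∑ b : ZMod q, eF q b from
      Fintype.sum_bijective (fun a => c * a) (mulLeft_bijective₀ c hc) _ _ (fun a => rfl)]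
    exact sum_eF q hq

lemma eF_finsum {ι : Type*} (s : Finset ι) (g : ι → ZMod q) :
    eF q (∑ i ∈ s, g i) = ∏ i ∈ s, eF q (g i) := by
  induction s using Finset.cons_induction with
  | empty => simp [eF_zero]
  | cons i s hi ih => rw [Finset.sum_cons, Finset.prod_cons, eF_add, ih]

lemma sum_eF_dot (hq : q.Prime) {n : ℕ} (χ : Fin n → ZMod q) :
    ∑ x : Fin n → ZMod q, eF q (∑ i, χ i * x i) =
      if χ = 0 then ((q : ℂ)) ^ n else 0 := by
  classical
  have key : ∑ x : Fin n → ZMod q, eF q (∑ i, χ i * x i) =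
      ∏ i : Fin n, ∑ a : ZMod q, eF q (χ i * a) := by
    rw [Finset.prod_univ_sum]
    rw [Fintype.piFinset_univ]
    exact Finset.sum_congr rfl fun x _ => eF_finsum q _ _
  rw [key]
  simp_rw [sum_eF_mul q hq]
  split_ifs with hχ
  · subst hχ; simp
  · obtain ⟨i, hi⟩ : ∃ i, χ i ≠ 0 := by
      by_contra h; push_neg at h; exact hχ (funext h)
    exact Finset.prod_eq_zero (Finset.mem_univ i) (by simp [hi])

lemma gauss_pair (hq : q.Prime) (γ α β : ZMod q) (hγ : γ ≠ 0) :
    ∑ ab : ZMod q × ZMod q, eF q (γ * ab.1 * ab.2 - α * ab.1 - β * ab.2) =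
      (q : ℂ) * eF q (-β * (γ⁻¹ * α)) := by
  haveI := Fact.mk hq
  rw [Fintype.sum_prod_type]
  rw [show (∑ a : ZMod q, ∑ b : ZMod q, eF q (γ * a * b - α * a - β * b)) =
      ∑ a : ZMod q, ∑ b : ZMod q, eF q (-β * b) * eF q ((γ * b - α) * a) by
    refine Finset.sum_congr rfl fun a _ => Finset.sum_congr rfl fun b _ => ?_
    rw [← eF_add]; ring_nf]
  rw [Finset.sum_comm]
  have step : ∀ b : ZMod q,
      (∑ a : ZMod q, eF q (-β * b) * eF q ((γ * b - α) * a)) =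
        if b = γ⁻¹ * α then (q : ℂ) * eF q (-β * b) else 0 := by
    intro b
    rw [← Finset.mul_sum, sum_eF_mul q hq]
    have hcond : γ * b - α = 0 ↔ b = γ⁻¹ * α := by
      constructor
      · intro h
        have : γ * b = α := by linear_combination h
        rw [← this, ← mul_assoc, inv_mul_cancel₀ hγ, one_mul]
      · intro h; subst h; rw [← mul_assoc, mul_inv_cancel₀ hγ, one_mul, sub_self]
    by_cases hb : b = γ⁻¹ * α
    · rw [if_pos (hcond.mpr hb), if_pos hb]; ring
    · rw [if_neg (fun h => hb (hcond.mp h)), if_neg hb]; ring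
  simp_rw [step]
  rw [Finset.sum_ite_eq' Finset.univ (γ⁻¹ * α)]
  simp

lemma sum_split_pairs {M : Type*} [AddCommMonoid M] (m : ℕ) (g : Fin (2 * m) → M) :
    ∑ i : Fin (2 * m), g i =
      ∑ k : Fin m, (g ⟨2 * k.val, by omega⟩ + g ⟨2 * k.val + 1, by omega⟩) := by
  have hbij : Function.Bijective
      (fun p : Fin m × Fin 2 => (⟨2 * p.1.val + p.2.val, by omega⟩ : Fin (2 * m))) := by
    rw [Fintype.bijective_iff_injective_and_card]
    constructor
    · rintro ⟨k, j⟩ ⟨k', j'⟩ h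
      simp only [Fin.mk.injEq] at h
      have hj := j.isLt; have hj' := j'.isLt
      have : k.val = k'.val ∧ j.val = j'.val := by omega
      exact Prod.ext (Fin.ext this.1) (Fin.ext this.2)
    · simp [mul_comm]
  rw [← hbij.sum_comp g, Fintype.sum_prod_type]
  refine Finset.sum_congr rfl fun k _ => ?_
  rw [Fin.sum_univ_two]
  congr 1 <;> exact congrArg g (Fin.ext (by simp))

variable {F : Type*}

def Dmap (q m : ℕ) (p : Fin m → ZMod q × ZMod q) : Fin (2 * m) → ZMod q :=
  fun i => if h : i.val % 2 = 0 then (p ⟨i.val / 2, by omega⟩).1 else (p ⟨i.val / 2, by omega⟩).2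

lemma Dmap_even (q m : ℕ) (p : Fin m → ZMod q × ZMod q) (k : Fin m) (h : 2 * k.val < 2 * m) :
    Dmap q m p ⟨2 * k.val, h⟩ = (p k).1 := by
  simp only [Dmap, Nat.mul_mod_right, dite_true]
  have hk : (⟨2 * k.val / 2, by omega⟩ : Fin m) = k := Fin.ext (by simp)
  rw [hk]

lemma Dmap_odd (q m : ℕ) (p : Fin m → ZMod q × ZMod q) (k : Fin m) (h : 2 * k.val + 1 < 2 * m) :
    Dmap q m p ⟨2 * k.val + 1, h⟩ = (p k).2 := by
  have h2 : (2 * k.val + 1) % 2 = 1 := by omega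
  simp only [Dmap, h2]
  norm_num
  have hk : (⟨(2 * k.val + 1) / 2, by omega⟩ : Fin m) = k := Fin.ext (by simp; omega)
  rw [hk]

lemma Dmap_bijective (q m : ℕ) : Function.Bijective (Dmap q m) := by
  constructor
  · intro p p' h
    funext k
    have h1 := congrFun h ⟨2 * k.val, by omega⟩
    have h2 := congrFun h ⟨2 * k.val + 1, by omega⟩
    rw [Dmap_even, Dmap_even] at h1
    rw [Dmap_odd, Dmap_odd] at h2
    exact Prod.ext h1 h2
  · intro x
    refine ⟨fun k => (x ⟨2 * k.val, by omega⟩, x ⟨2 * k.val + 1, by omega⟩), ?_⟩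
    funext i
    by_cases h : i.val % 2 = 0
    · simp only [Dmap, dif_pos h]
      have hk : (⟨2 * (i.val / 2), by omega⟩ : Fin (2 * m)) = i := Fin.ext (by simp; omega)
      rw [hk]
    · simp only [Dmap, dif_neg h]
      have hk : (⟨2 * (i.val / 2) + 1, by omega⟩ : Fin (2 * m)) = i := Fin.ext (by simp; omega)
      rw [hk]

lemma quadQ_Dmap (q m : ℕ) (p : Fin m → ZMod q × ZMod q) :
    quadQ q (2 * m) (Dmap q m p) = ∑ k : Fin m, (p k).1 * (p k).2 := by
  rw [quadQ, sum_split_pairs]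
  refine Finset.sum_congr rfl fun k _ => ?_
  have hc1 : (2 * k.val) % 2 = 0 ∧ 2 * k.val + 1 < 2 * m := ⟨by omega, by omega⟩
  have hc2 : ¬((2 * k.val + 1) % 2 = 0 ∧ (2 * k.val + 1) + 1 < 2 * m) := by omega
  rw [dif_pos hc1, dif_neg hc2, add_zero, Dmap_even]
  rw [show (⟨2 * k.val + 1, hc1.2⟩ : Fin (2 * m)) = ⟨2 * k.val + 1, by omega⟩ from rfl,
    Dmap_odd]

lemma dot_Dmap (q m : ℕ) (χ : Fin (2 * m) → ZMod q) (p : Fin m → ZMod q × ZMod q) :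
    ∑ i, χ i * (Dmap q m p) i =
      ∑ k : Fin m, (χ ⟨2 * k.val, by omega⟩ * (p k).1 + χ ⟨2 * k.val + 1, by omega⟩ * (p k).2) := by
  rw [sum_split_pairs m (fun i => χ i * Dmap q m p i)]
  refine Finset.sum_congr rfl fun k _ => ?_
  rw [Dmap_even, Dmap_odd]

lemma gauss_full (hq : q.Prime) (m : ℕ) (γ : ZMod q) (hγ : γ ≠ 0) (χ : Fin (2 * m) → ZMod q) :
    ‖∑ x : Fin (2 * m) → ZMod q,
      eF q (γ * quadQ q (2 * m) x - ∑ i, χ i * x i)‖ = (q : ℝ) ^ m := by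
  classical
  rw [← (Dmap_bijective q m).sum_comp
    (fun x => eF q (γ * quadQ q (2 * m) x - ∑ i, χ i * x i))]
  have expand : ∀ p : Fin m → ZMod q × ZMod q,
      eF q (γ * quadQ q (2 * m) (Dmap q m p) - ∑ i, χ i * (Dmap q m p) i) =
        ∏ k : Fin m, eF q (γ * (p k).1 * (p k).2
          - χ ⟨2 * k.val, by omega⟩ * (p k).1 - χ ⟨2 * k.val + 1, by omega⟩ * (p k).2) := by
    intro p
    rw [quadQ_Dmap, dot_Dmap, ← eF_finsum]
    congr 1
    rw [Finset.mul_sum, ← Finset.sum_sub_distrib]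
    refine Finset.sum_congr rfl fun k _ => ?_
    ring
  simp_rw [expand]
  have prodform : (∑ p : Fin m → ZMod q × ZMod q, ∏ k : Fin m,
        eF q (γ * (p k).1 * (p k).2 - χ ⟨2 * k.val, by omega⟩ * (p k).1
          - χ ⟨2 * k.val + 1, by omega⟩ * (p k).2)) =
      ∏ k : Fin m, ∑ ab : ZMod q × ZMod q,
        eF q (γ * ab.1 * ab.2 - χ ⟨2 * k.val, by omega⟩ * ab.1
          - χ ⟨2 * k.val + 1, by omega⟩ * ab.2) := by
    rw [Finset.prod_univ_sum]
    rw [Fintype.piFinset_univ]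
  rw [prodform, norm_prod]
  have : ∀ k : Fin m, ‖∑ ab : ZMod q × ZMod q,
      eF q (γ * ab.1 * ab.2 - χ ⟨2 * k.val, by omega⟩ * ab.1
        - χ ⟨2 * k.val + 1, by omega⟩ * ab.2)‖ = (q : ℝ) := by
    intro k
    rw [gauss_pair q hq _ _ _ hγ, norm_mul, eF_abs, mul_one, Complex.norm_natCast]
  simp_rw [this]
  rw [Finset.prod_const, Finset.card_univ, Fintype.card_fin]

lemma sum_eF_neg_dot (hq : q.Prime) {n : ℕ} (χ : Fin n → ZMod q) (hχ : χ ≠ 0) :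
    ∑ x : Fin n → ZMod q, eF q (-(∑ i, χ i * x i)) = 0 := by
  have : ∀ x : Fin n → ZMod q, -(∑ i, χ i * x i) = ∑ i, (-χ) i * x i := by
    intro x
    rw [← Finset.sum_neg_distrib]
    exact Finset.sum_congr rfl fun i _ => by simp [Pi.neg_apply]
  simp_rw [this]
  rw [sum_eF_dot q hq, if_neg (by simpa [neg_eq_zero] using hχ)]

lemma sum_quadF_mul (hq : q.Prime) [DecidableEq (ZMod q)] (m : ℕ) (χ : Fin (2 * m) → ZMod q)
    (hχ : χ ≠ 0) :
    ‖∑ x : Fin (2 * m) → ZMod q, quadF q (2 * m) x * eF q (-(∑ i, χ i * x i))‖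
      ≤ (q : ℝ) ^ m := by
  classical
  have hq1 : (1:ℝ) ≤ q := by exact_mod_cast hq.one_lt.le
  have pointwise : ∀ x : Fin (2 * m) → ZMod q,
      quadF q (2 * m) x * eF q (-(∑ i, χ i * x i)) =
        (1/2) * eF q (-(∑ i, χ i * x i)) +
        ∑ γ ∈ Finset.univ.filter (fun γ : ZMod q => γ ≠ 0), (1 / (2 * (q : ℂ))) *
          eF q (γ * quadQ q (2 * m) x - ∑ i, χ i * x i) := by
    intro x
    rw [quadF, add_mul, Finset.sum_mul]
    congr 1
    refine Finset.sum_congr rfl fun γ _ => ?_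
    rw [mul_assoc, ← eF_add, sub_eq_add_neg]
  simp_rw [pointwise]
  rw [Finset.sum_add_distrib, ← Finset.mul_sum, sum_eF_neg_dot q hq χ hχ, mul_zero, zero_add]
  rw [Finset.sum_comm]
  refine le_trans (norm_sum_le _ _) ?_
  have each : ∀ γ ∈ Finset.univ.filter (fun γ : ZMod q => γ ≠ 0),
      ‖∑ x : Fin (2 * m) → ZMod q, (1 / (2 * (q : ℂ))) *
        eF q (γ * quadQ q (2 * m) x - ∑ i, χ i * x i)‖ = (1 / (2 * (q:ℝ))) * (q:ℝ) ^ m := by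
    intro γ hγ
    rw [← Finset.mul_sum, norm_mul, gauss_full q hq m γ (by simpa using hγ) χ]
    congr 1
    rw [norm_div, norm_one, norm_mul, Complex.norm_natCast, Complex.norm_two]
  rw [Finset.sum_congr rfl each, Finset.sum_const, nsmul_eq_mul]
  have hcard : ((Finset.univ.filter (fun γ : ZMod q => γ ≠ 0)).card : ℝ) ≤ (q:ℝ) := by
    calc ((Finset.univ.filter (fun γ : ZMod q => γ ≠ 0)).card : ℝ)
        ≤ (Finset.univ : Finset (ZMod q)).card := by
          exact_mod_cast Finset.card_le_card (Finset.filter_subset _ _)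
      _ = (q:ℝ) := by haveI := Fact.mk hq; rw [Finset.card_univ]; simp [ZMod.card]
  calc ((Finset.univ.filter (fun γ : ZMod q => γ ≠ 0)).card : ℝ) * ((1 / (2*(q:ℝ))) * (q:ℝ)^m)
      ≤ (q:ℝ) * ((1 / (2*(q:ℝ))) * (q:ℝ)^m) := by
        apply mul_le_mul_of_nonneg_right hcard
        positivity
    _ ≤ (q:ℝ)^m := by
        rw [show (q:ℝ) * ((1 / (2*(q:ℝ))) * (q:ℝ)^m) = (q:ℝ)^m / 2 by
          field_simp]
        linarith [pow_pos (by linarith : (0:ℝ) < q) m]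

lemma sum_eF_dot' (hq : q.Prime) {n : ℕ} (u : Fin n → ZMod q) :
    ∑ χ : Fin n → ZMod q, eF q (∑ i, χ i * u i) =
      if u = 0 then ((q : ℂ)) ^ n else 0 := by
  have : ∀ χ : Fin n → ZMod q, (∑ i, χ i * u i) = ∑ i, u i * χ i := by
    intro χ; exact Finset.sum_congr rfl fun i _ => mul_comm _ _
  simp_rw [this]
  exact sum_eF_dot q hq u

lemma dot_sub (q : ℕ) {n : ℕ} (χ z w : Fin n → ZMod q) :
    (-(∑ i, χ i * w i)) + (∑ i, χ i * z i) = ∑ i, (z - w) i * χ i := by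
  rw [← Finset.sum_neg_distrib, ← Finset.sum_add_distrib]
  exact Finset.sum_congr rfl fun i _ => by simp only [Pi.sub_apply]; ring

lemma inversion (hq : q.Prime) {n : ℕ} (h : (Fin n → ZMod q) → ℂ) (z : Fin n → ZMod q) :
    h z = ∑ χ : Fin n → ZMod q,
      ((∑ w : Fin n → ZMod q, h w * eF q (-(∑ i, χ i * w i))) / (q : ℂ) ^ n) *
        eF q (∑ i, χ i * z i) := by
  classical
  have hqc : ((q:ℂ))^n ≠ 0 := by
    apply pow_ne_zero; exact_mod_cast Nat.cast_ne_zero.mpr (NeZero.ne q)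
  have key : ∀ χ : Fin n → ZMod q,
      ((∑ w : Fin n → ZMod q, h w * eF q (-(∑ i, χ i * w i))) / (q : ℂ) ^ n) *
        eF q (∑ i, χ i * z i) =
      ∑ w : Fin n → ZMod q, h w * eF q (∑ i, (z - w) i * χ i) / (q:ℂ)^n := by
    intro χ
    rw [div_mul_eq_mul_div, Finset.sum_mul, Finset.sum_div]
    refine Finset.sum_congr rfl fun w _ => ?_
    rw [mul_assoc, ← eF_add, dot_sub q χ z w]
  simp_rw [key]
  rw [Finset.sum_comm]
  have inner : ∀ w : Fin n → ZMod q,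
      (∑ χ : Fin n → ZMod q, h w * eF q (∑ i, (z - w) i * χ i) / (q:ℂ)^n) =
        if w = z then h w else 0 := by
    intro w
    rw [show (∑ χ : Fin n → ZMod q, h w * eF q (∑ i, (z - w) i * χ i) / (q:ℂ)^n) =
        (h w / (q:ℂ)^n) * ∑ χ : Fin n → ZMod q, eF q (∑ i, (z - w) i * χ i) by
      rw [Finset.mul_sum]; exact Finset.sum_congr rfl fun χ _ => by ring]
    rw [sum_eF_dot q hq (z - w)]
    by_cases hw : w = z
    · rw [if_pos (by rw [hw]; simp), if_pos hw, div_mul_cancel₀ _ hqc]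
    · rw [if_neg (fun hc => hw (sub_eq_zero.mp hc).symm), if_neg hw, mul_zero]
  rw [Finset.sum_congr rfl (fun w _ => inner w), Finset.sum_ite_eq' Finset.univ z h,
    if_pos (Finset.mem_univ z)]

lemma parseval (hq : q.Prime) {n : ℕ} (S : Finset (Fin n → ZMod q)) :
    ∑ χ : Fin n → ZMod q,
        (‖∑ x ∈ S, eF q (∑ i, χ i * x i)‖)^2 = (q:ℝ)^n * S.card := by
  classical
  have cplx : ∑ χ : Fin n → ZMod q,
      ((∑ x ∈ S, eF q (∑ i, χ i * x i)) *
        (starRingEnd ℂ) (∑ x ∈ S, eF q (∑ i, χ i * x i))) = ((q:ℂ)^n * S.card : ℂ) := by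
    have expand : ∀ χ : Fin n → ZMod q,
        ((∑ x ∈ S, eF q (∑ i, χ i * x i)) *
          (starRingEnd ℂ) (∑ x ∈ S, eF q (∑ i, χ i * x i))) =
        ∑ x ∈ S, ∑ y ∈ S, eF q (∑ i, (x - y) i * χ i) := by
      intro χ
      rw [map_sum, Finset.sum_mul_sum]
      refine Finset.sum_congr rfl fun x _ => Finset.sum_congr rfl fun y _ => ?_
      rw [conj_eF, ← eF_add, add_comm, dot_sub q χ x y]
    rw [Finset.sum_congr rfl (fun χ _ => expand χ)]
    rw [show ∑ χ : Fin n → ZMod q, ∑ x ∈ S, ∑ y ∈ S, eF q (∑ i, (x - y) i * χ i) =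
        ∑ x ∈ S, ∑ y ∈ S, ∑ χ : Fin n → ZMod q, eF q (∑ i, (x - y) i * χ i) by
      rw [Finset.sum_comm]
      exact Finset.sum_congr rfl fun x _ => Finset.sum_comm]
    have inner : ∀ x ∈ S, (∑ y ∈ S, ∑ χ : Fin n → ZMod q, eF q (∑ i, (x - y) i * χ i)) =
        ((q:ℂ)^n) := by
      intro x hx
      have step : ∀ y, (∑ χ : Fin n → ZMod q, eF q (∑ i, (x - y) i * χ i)) =
          if y = x then ((q:ℂ))^n else 0 := by
        intro y
        rw [sum_eF_dot q hq (x - y)]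
        refine if_congr ?_ rfl rfl
        rw [sub_eq_zero, eq_comm]
      rw [Finset.sum_congr rfl (fun y _ => step y), Finset.sum_ite_eq' S x, if_pos hx]
    rw [Finset.sum_congr rfl inner, Finset.sum_const, nsmul_eq_mul, mul_comm]
  have real_eq : ∀ χ : Fin n → ZMod q,
      ((‖∑ x ∈ S, eF q (∑ i, χ i * x i)‖)^2 : ℝ) =
        (((∑ x ∈ S, eF q (∑ i, χ i * x i)) *
          (starRingEnd ℂ) (∑ x ∈ S, eF q (∑ i, χ i * x i))).re) := by
    intro χ
    rw [Complex.mul_conj]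
    rw [Complex.sq_norm]
    simp
  rw [Finset.sum_congr rfl (fun χ _ => real_eq χ)]
  rw [← Complex.re_sum]
  rw [cplx]
  norm_cast

/-- spreadness of the quadratic-phase function in `𝔽ⁿ`, `𝔽` of prime order:
all nontrivial Fourier coefficients of `f` are at most `e^{−cn}`, and consequently for all
`S, T ⊆ 𝔽ⁿ` the bilinear form `E 1_S(x)(f(x+y) − E f)1_T(y)` is at most
`e^{−cn}·√(|S||T|)/|𝔽|ⁿ` in absolute value. -/
theorem stmt_18 (q : ℕ) (hq : q.Prime) [NeZero q] [DecidableEq (ZMod q)] :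
    ∃ c : ℝ, 0 < c ∧
      ∀ n : ℕ, Even n →
        (∀ χ : Fin n → ZMod q, χ ≠ 0 →
          ‖(∑ x : Fin n → ZMod q,
              quadF q n x * eF q (-(∑ i, χ i * x i))) / (q : ℂ) ^ n‖
            ≤ Real.exp (-c * n)) ∧
        (∀ S T : Finset (Fin n → ZMod q),
          ‖(∑ x : Fin n → ZMod q, ∑ y : Fin n → ZMod q,
              (if x ∈ S then (1 : ℂ) else 0) *
                (quadF q n (x + y) - (∑ z : Fin n → ZMod q, quadF q n z) / (q : ℂ) ^ n) *
                (if y ∈ T then (1 : ℂ) else 0)) / ((q : ℂ) ^ n * (q : ℂ) ^ n)‖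
            ≤ Real.exp (-c * n) * Real.sqrt ((S.card : ℝ) * T.card) / (q : ℝ) ^ n) := by
  classical
  have hq1 : (1:ℝ) < q := by exact_mod_cast hq.one_lt
  have hq0 : (0:ℝ) < q := by linarith
  refine ⟨Real.log q / 2, div_pos (Real.log_pos hq1) two_pos, ?_⟩
  intro n hn
  obtain ⟨m, rfl⟩ : ∃ m, n = 2 * m := ⟨n / 2, by have h2 := Nat.even_iff.mp hn; omega⟩
  set c : ℝ := Real.log q / 2 with hc
  have hexp : Real.exp (-c * ((2 * m : ℕ) : ℝ)) = ((q:ℝ)^m)⁻¹ := by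
    have h1 : -c * ((2 * m : ℕ) : ℝ) = -(m * Real.log q) := by
      push_cast; rw [hc]; ring
    rw [h1, Real.exp_neg, Real.exp_nat_mul, Real.exp_log hq0]
  have hqpow : (0:ℝ) < (q:ℝ) ^ (2 * m) := by positivity
  have habsq : ‖(q:ℂ) ^ (2*m)‖ = (q:ℝ) ^ (2*m) := by
    rw [norm_pow, Complex.norm_natCast]
  have hMbound : ∀ χ : Fin (2*m) → ZMod q, χ ≠ 0 →
      ‖(∑ x : Fin (2*m) → ZMod q,
        quadF q (2*m) x * eF q (-(∑ i, χ i * x i))) / (q : ℂ) ^ (2*m)‖ ≤ ((q:ℝ)^m)⁻¹ := by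
    intro χ hχ
    rw [norm_div, habsq, div_le_iff₀ hqpow]
    calc ‖∑ x : Fin (2*m) → ZMod q, quadF q (2*m) x * eF q (-(∑ i, χ i * x i))‖
        ≤ (q:ℝ)^m := sum_quadF_mul q hq m χ hχ
      _ = ((q:ℝ)^m)⁻¹ * (q:ℝ)^(2*m) := by
          rw [two_mul, pow_add]
          field_simp
  constructor
  · intro χ hχ
    rw [hexp]
    exact hMbound χ hχ
  · intro S T
    set c0 : ℂ := (∑ z : Fin (2*m) → ZMod q, quadF q (2*m) z) / (q : ℂ) ^ (2*m) with hc0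
    set g : (Fin (2*m) → ZMod q) → ℂ := fun z => quadF q (2*m) z - c0 with hg
    set gh : (Fin (2*m) → ZMod q) → ℂ := fun χ =>
      (∑ w : Fin (2*m) → ZMod q, g w * eF q (-(∑ i, χ i * w i))) / (q : ℂ) ^ (2*m) with hgh
    have hqc : ((q:ℂ))^(2*m) ≠ 0 := by
      apply pow_ne_zero
      exact_mod_cast Nat.cast_ne_zero.mpr (NeZero.ne q)
    -- Step 1 : indicator sums reduce to sums over S, T
    have step1 : (∑ x : Fin (2*m) → ZMod q, ∑ y : Fin (2*m) → ZMod q,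
        (if x ∈ S then (1:ℂ) else 0) * (quadF q (2*m) (x+y) - c0) * (if y ∈ T then (1:ℂ) else 0))
        = ∑ x ∈ S, ∑ y ∈ T, g (x+y) := by
      have e1 : ∀ x : Fin (2*m) → ZMod q,
          (∑ y : Fin (2*m) → ZMod q, (if x ∈ S then (1:ℂ) else 0) *
            (quadF q (2*m) (x+y) - c0) * (if y ∈ T then (1:ℂ) else 0)) =
          if x ∈ S then (∑ y ∈ T, g (x+y)) else 0 := by
        intro x
        by_cases hx : x ∈ S
        · simp only [if_pos hx, one_mul]
          rw [show (∑ y : Fin (2*m) → ZMod q,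
              (quadF q (2*m) (x+y) - c0) * (if y ∈ T then (1:ℂ) else 0)) =
              ∑ y : Fin (2*m) → ZMod q, (if y ∈ T then g (x+y) else 0) from
            Finset.sum_congr rfl fun y _ => by
              simp only [hg]
              split_ifs <;> ring]
          rw [Finset.sum_ite_mem, Finset.univ_inter]
        · simp only [if_neg hx]
          exact Finset.sum_eq_zero fun y _ => by ring
      rw [Finset.sum_congr rfl (fun x _ => e1 x), Finset.sum_ite_mem, Finset.univ_inter]
    -- Step 2 : Fourier expansion of the bilinear form
    have hinv : ∀ z, g z = ∑ χ : Fin (2*m) → ZMod q, gh χ * eF q (∑ i, χ i * z i) :=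
      fun z => inversion q hq g z
    have hdotadd : ∀ (χ x y : Fin (2*m) → ZMod q),
        eF q (∑ i, χ i * (x + y) i) = eF q (∑ i, χ i * x i) * eF q (∑ i, χ i * y i) := by
      intro χ x y
      rw [← eF_add]
      congr 1
      rw [← Finset.sum_add_distrib]
      exact Finset.sum_congr rfl fun i _ => by simp only [Pi.add_apply]; ring
    have step2 : (∑ x ∈ S, ∑ y ∈ T, g (x+y)) =
        ∑ χ : Fin (2*m) → ZMod q, gh χ * (∑ x ∈ S, eF q (∑ i, χ i * x i)) *
          (∑ y ∈ T, eF q (∑ i, χ i * y i)) := by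
      calc (∑ x ∈ S, ∑ y ∈ T, g (x+y))
          = ∑ x ∈ S, ∑ y ∈ T, ∑ χ : Fin (2*m) → ZMod q,
              gh χ * (eF q (∑ i, χ i * x i) * eF q (∑ i, χ i * y i)) := by
            refine Finset.sum_congr rfl fun x _ => Finset.sum_congr rfl fun y _ => ?_
            rw [hinv (x+y)]
            exact Finset.sum_congr rfl fun χ _ => by rw [hdotadd]
        _ = ∑ χ : Fin (2*m) → ZMod q, ∑ x ∈ S, ∑ y ∈ T,
              gh χ * (eF q (∑ i, χ i * x i) * eF q (∑ i, χ i * y i)) := by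
            rw [show (∑ x ∈ S, ∑ y ∈ T, ∑ χ : Fin (2*m) → ZMod q,
                gh χ * (eF q (∑ i, χ i * x i) * eF q (∑ i, χ i * y i))) =
                ∑ x ∈ S, ∑ χ : Fin (2*m) → ZMod q, ∑ y ∈ T,
                gh χ * (eF q (∑ i, χ i * x i) * eF q (∑ i, χ i * y i)) from
              Finset.sum_congr rfl fun x _ => Finset.sum_comm]
            exact Finset.sum_comm
        _ = ∑ χ : Fin (2*m) → ZMod q, gh χ * (∑ x ∈ S, eF q (∑ i, χ i * x i)) *
              (∑ y ∈ T, eF q (∑ i, χ i * y i)) := by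
            refine Finset.sum_congr rfl fun χ _ => ?_
            rw [mul_assoc, Finset.sum_mul_sum, Finset.mul_sum]
            refine Finset.sum_congr rfl fun x _ => ?_
            rw [Finset.mul_sum]
    -- bound on Fourier coefficients of g
    have hghbound : ∀ χ : Fin (2*m) → ZMod q, ‖gh χ‖ ≤ ((q:ℝ)^m)⁻¹ := by
      intro χ
      by_cases hχ : χ = 0
      · have : gh χ = 0 := by
          rw [hgh]
          subst hχ
          simp only []
          rw [show (∑ w : Fin (2*m) → ZMod q, g w * eF q (-(∑ i, (0 : Fin (2*m) → ZMod q) i * w i)))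
              = ∑ w : Fin (2*m) → ZMod q, g w from
            Finset.sum_congr rfl fun w _ => by simp [eF_zero]]
          rw [show (∑ w : Fin (2*m) → ZMod q, g w) = 0 from ?_, zero_div]
          rw [hg]
          rw [Finset.sum_sub_distrib, Finset.sum_const, nsmul_eq_mul, Finset.card_univ]
          rw [show ((Fintype.card (Fin (2*m) → ZMod q) : ℂ)) = ((q:ℂ))^(2*m) by
            rw [Fintype.card_fun]
            haveI := Fact.mk hq
            simp [ZMod.card]]
          rw [hc0, mul_div_cancel₀ _ hqc, sub_self]
        rw [this, norm_zero]
        positivity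
      · have heq : gh χ = (∑ x : Fin (2*m) → ZMod q,
            quadF q (2*m) x * eF q (-(∑ i, χ i * x i))) / (q : ℂ) ^ (2*m) := by
          simp only [hgh]
          congr 1
          rw [show (∑ w : Fin (2*m) → ZMod q, g w * eF q (-(∑ i, χ i * w i))) =
              (∑ w : Fin (2*m) → ZMod q, quadF q (2*m) w * eF q (-(∑ i, χ i * w i))) -
              c0 * ∑ w : Fin (2*m) → ZMod q, eF q (-(∑ i, χ i * w i)) by
            rw [Finset.mul_sum, ← Finset.sum_sub_distrib]
            exact Finset.sum_congr rfl fun w _ => by rw [hg]; ring]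
          rw [sum_eF_neg_dot q hq χ hχ, mul_zero, sub_zero]
        rw [heq]
        exact hMbound χ hχ
    -- Cauchy-Schwarz + Parseval
    have hABnn : ∀ χ : Fin (2*m) → ZMod q,
        (0:ℝ) ≤ ‖∑ x ∈ S, eF q (∑ i, χ i * x i)‖ *
          ‖∑ y ∈ T, eF q (∑ i, χ i * y i)‖ := fun χ => by positivity
    have hCS : (∑ χ : Fin (2*m) → ZMod q,
        ‖∑ x ∈ S, eF q (∑ i, χ i * x i)‖ *
          ‖∑ y ∈ T, eF q (∑ i, χ i * y i)‖)
        ≤ (q:ℝ)^(2*m) * Real.sqrt ((S.card : ℝ) * T.card) := by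
      have h1 := Finset.sum_mul_sq_le_sq_mul_sq Finset.univ
        (fun χ : Fin (2*m) → ZMod q => ‖∑ x ∈ S, eF q (∑ i, χ i * x i)‖)
        (fun χ : Fin (2*m) → ZMod q => ‖∑ y ∈ T, eF q (∑ i, χ i * y i)‖)
      rw [parseval q hq S, parseval q hq T] at h1
      have h2 : (0:ℝ) ≤ ∑ χ : Fin (2*m) → ZMod q,
          ‖∑ x ∈ S, eF q (∑ i, χ i * x i)‖ *
            ‖∑ y ∈ T, eF q (∑ i, χ i * y i)‖ :=
        Finset.sum_nonneg fun χ _ => hABnn χ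
      have h3 : ((q:ℝ)^(2*m) * S.card) * ((q:ℝ)^(2*m) * T.card) =
          ((q:ℝ)^(2*m) * Real.sqrt ((S.card : ℝ) * T.card))^2 := by
        rw [mul_pow, Real.sq_sqrt (mul_nonneg (Nat.cast_nonneg _) (Nat.cast_nonneg _))]
        ring
      rw [h3] at h1
      calc (∑ χ : Fin (2*m) → ZMod q,
            ‖∑ x ∈ S, eF q (∑ i, χ i * x i)‖ *
              ‖∑ y ∈ T, eF q (∑ i, χ i * y i)‖)
          = Real.sqrt ((∑ χ : Fin (2*m) → ZMod q,
              ‖∑ x ∈ S, eF q (∑ i, χ i * x i)‖ *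
                ‖∑ y ∈ T, eF q (∑ i, χ i * y i)‖)^2) := (Real.sqrt_sq h2).symm
        _ ≤ Real.sqrt (((q:ℝ)^(2*m) * Real.sqrt ((S.card : ℝ) * T.card))^2) :=
            Real.sqrt_le_sqrt h1
        _ = (q:ℝ)^(2*m) * Real.sqrt ((S.card : ℝ) * T.card) := Real.sqrt_sq (mul_nonneg hqpow.le (Real.sqrt_nonneg _))
    -- assemble
    have habsB : ‖∑ x : Fin (2*m) → ZMod q, ∑ y : Fin (2*m) → ZMod q,
        (if x ∈ S then (1:ℂ) else 0) * (quadF q (2*m) (x+y) - c0) * (if y ∈ T then (1:ℂ) else 0)‖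
        ≤ ((q:ℝ)^m)⁻¹ * ((q:ℝ)^(2*m) * Real.sqrt ((S.card : ℝ) * T.card)) := by
      rw [step1, step2]
      refine le_trans (norm_sum_le _ _) ?_
      have hterm : ∀ χ : Fin (2*m) → ZMod q,
          ‖gh χ * (∑ x ∈ S, eF q (∑ i, χ i * x i)) *
            (∑ y ∈ T, eF q (∑ i, χ i * y i))‖ ≤
          ((q:ℝ)^m)⁻¹ * (‖∑ x ∈ S, eF q (∑ i, χ i * x i)‖ *
            ‖∑ y ∈ T, eF q (∑ i, χ i * y i)‖) := by
        intro χ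
        rw [norm_mul, norm_mul, mul_assoc]
        exact mul_le_mul_of_nonneg_right (hghbound χ) (hABnn χ)
      refine le_trans (Finset.sum_le_sum fun χ _ => hterm χ) ?_
      rw [← Finset.mul_sum]
      exact mul_le_mul_of_nonneg_left hCS (by positivity)
    rw [norm_div, norm_mul, habsq, hexp]
    calc ‖∑ x : Fin (2*m) → ZMod q, ∑ y : Fin (2*m) → ZMod q,
          (if x ∈ S then (1:ℂ) else 0) * (quadF q (2*m) (x+y) - c0) * (if y ∈ T then (1:ℂ) else 0)‖
          / ((q:ℝ)^(2*m) * (q:ℝ)^(2*m))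
        ≤ (((q:ℝ)^m)⁻¹ * ((q:ℝ)^(2*m) * Real.sqrt ((S.card : ℝ) * T.card)))
          / ((q:ℝ)^(2*m) * (q:ℝ)^(2*m)) := by gcongr
      _ = ((q:ℝ)^m)⁻¹ * Real.sqrt ((S.card : ℝ) * T.card) / (q:ℝ)^(2*m) := by
          rw [mul_div_assoc, mul_div_mul_left _ _ hqpow.ne', ← mul_div_assoc]
end
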